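/- arXiv:1805.10693 — 11 statements merged into one kernel-verified Lean document; each statement's English description precedes it below -/
import Mathlib

section
/- Suppose a mechanism π : ℝ → ℝ for a single agent with single-peaked preferences is continuous, and for every y ∈ ℝ either π(y) = y or π is locally constant at y. Then there exist constants α¹, α² ∈ ℝ ∪ {-∞, ∞} such that for all y ∈ ℝ, π(y) = med(y, α¹, α²). -/
/-- `f` is locally constant at `x`: constant on some closed interval `[x-ε, x+ε]`. -/
def LocallyConstantAt (f : ℝ → ℝ) (x : ℝ) : Prop :=
  ∃ ε > 0, ∀ x' ∈ Set.Icc (x - ε) (x + ε), f x' = f x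

lemma key (π : ℝ → ℝ) (hcont : Continuous π) (s : Set ℝ) (hs : IsPreconnected s)
    (h : ∀ x ∈ s, LocallyConstantAt π x) {x : ℝ} (hx : x ∈ s) :
    ∀ y ∈ s, π y = π x := by
  classical
  have h' : ∀ y : ℝ, y ∈ s → ∃ ε, 0 < ε ∧ ∀ x' ∈ Set.Icc (y - ε) (y + ε), π x' = π y := by
    intro y hy; obtain ⟨ε, hε, hc⟩ := h y hy; exact ⟨ε, hε, hc⟩
  choose ε hεpos hconst using h'
  set u : Set ℝ := ⋃ (y : ℝ) (hy : y ∈ s) (_ : π y = π x),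
      Set.Ioo (y - ε y hy) (y + ε y hy) with hu
  have hu_open : IsOpen u :=
    isOpen_iUnion fun y => isOpen_iUnion fun hy => isOpen_iUnion fun _ => isOpen_Ioo
  have hv_open : IsOpen {z : ℝ | π z ≠ π x} := by
    have : IsClosed {z : ℝ | π z = π x} := isClosed_eq hcont continuous_const
    exact this.isOpen_compl
  have hufix : ∀ z ∈ u, π z = π x := by
    intro z hz
    simp only [hu, Set.mem_iUnion] at hz
    obtain ⟨y, hy, hyx, hzy⟩ := hz
    have : π z = π y := hconst y hy z (Set.Ioo_subset_Icc_self hzy)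
    rw [this, hyx]
  intro y hy
  by_contra hne
  have hsub : s ⊆ u ∪ {z : ℝ | π z ≠ π x} := by
    intro z hz
    by_cases hzx : π z = π x
    · left
      simp only [hu, Set.mem_iUnion]
      exact ⟨z, hz, hzx, by linarith [hεpos z hz], by linarith [hεpos z hz]⟩
    · exact Or.inr hzx
  have hxu : x ∈ u := by
    simp only [hu, Set.mem_iUnion]
    exact ⟨x, hx, rfl, by linarith [hεpos x hx], by linarith [hεpos x hx]⟩
  obtain ⟨z, hzs, hzu, hzv⟩ := hs u _ hu_open hv_open hsub ⟨x, hx, hxu⟩ ⟨y, hy, hne⟩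
  exact hzv (hufix z hzu)

/-- If `π` is continuous and at every point it either equals the identity or is locally
constant, then there are extended reals `α¹ ≤ α²` with `π y = med(y, α¹, α²)`
(expressed as `max (min y α²) α¹` in the extended reals). -/
theorem stmt0 (π : ℝ → ℝ) (hcont : Continuous π)
    (h : ∀ y : ℝ, π y = y ∨ LocallyConstantAt π y) :
    ∃ a b : EReal, a ≤ b ∧ ∀ y : ℝ, (π y : EReal) = max (min (y : EReal) b) a := by

  classical
  set S : Set ℝ := {y | π y = y} with hS
  have hSclosed : IsClosed S := isClosed_eq hcont continuous_id
  by_cases hSne : S.Nonempty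
  · obtain ⟨s0, hs0⟩ := hSne
    -- S is "order connected": no interior gaps
    have hA : ∀ x ∈ S, ∀ z ∈ S, ∀ y, x < y → y < z → y ∈ S := by
      intro x hxS z hzS y hxy hyz
      by_contra hyS
      set u := sSup (S ∩ Set.Iic y) with hu
      set v := sInf (S ∩ Set.Ici y) with hv
      have hune : (S ∩ Set.Iic y).Nonempty := ⟨x, hxS, le_of_lt hxy⟩
      have hvne : (S ∩ Set.Ici y).Nonempty := ⟨z, hzS, le_of_lt hyz⟩
      have hubdd : BddAbove (S ∩ Set.Iic y) := ⟨y, fun w hw => hw.2⟩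
      have hvbdd : BddBelow (S ∩ Set.Ici y) := ⟨y, fun w hw => hw.2⟩
      have huc : IsClosed (S ∩ Set.Iic y) := hSclosed.inter isClosed_Iic
      have hvc : IsClosed (S ∩ Set.Ici y) := hSclosed.inter isClosed_Ici
      have humem : u ∈ S ∩ Set.Iic y := huc.csSup_mem hune hubdd
      have hvmem : v ∈ S ∩ Set.Ici y := hvc.csInf_mem hvne hvbdd
      have huy : u < y := lt_of_le_of_ne humem.2 (fun e => hyS (e ▸ humem.1))
      have hyv : y < v := lt_of_le_of_ne hvmem.2 (fun e => hyS (e.symm ▸ hvmem.1))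
      have huv : u < v := lt_trans huy hyv
      have hgap : ∀ w ∈ Set.Ioo u v, LocallyConstantAt π w := by
        intro w hw
        rcases h w with hwS | hwlc
        · exfalso
          by_cases hwy : w ≤ y
          · exact absurd (le_csSup hubdd ⟨hwS, hwy⟩) (not_le.mpr hw.1)
          · exact absurd (csInf_le hvbdd ⟨hwS, le_of_not_ge hwy⟩) (not_le.mpr hw.2)
        · exact hwlc
      have hyIoo : y ∈ Set.Ioo u v := ⟨huy, hyv⟩
      have hconstIoo : ∀ w ∈ Set.Ioo u v, π w = π y :=
        key π hcont _ isPreconnected_Ioo hgap hyIoo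
      have heq : Set.EqOn π (fun _ => π y) (closure (Set.Ioo u v)) :=
        Set.EqOn.closure (fun w hw => hconstIoo w hw) hcont continuous_const
      rw [closure_Ioo (ne_of_lt huv)] at heq
      have hu' : π u = π y := heq (Set.left_mem_Icc.mpr (le_of_lt huv))
      have hv' : π v = π y := heq (Set.right_mem_Icc.mpr (le_of_lt huv))
      have : u = v := by rw [← humem.1, ← hvmem.1, hu', hv']
      exact absurd this (ne_of_lt huv)
    refine ⟨sInf ((↑) '' S : Set EReal), sSup ((↑) '' S : Set EReal), ?_, ?_⟩
    · exact le_trans (sInf_le (Set.mem_image_of_mem _ hs0)) (le_sSup (Set.mem_image_of_mem _ hs0))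
    intro y
    by_cases hyS : y ∈ S
    · have h1 : sInf ((↑) '' S : Set EReal) ≤ (y : EReal) := sInf_le (Set.mem_image_of_mem _ hyS)
      have h2 : (y : EReal) ≤ sSup ((↑) '' S : Set EReal) := le_sSup (Set.mem_image_of_mem _ hyS)
      rw [show π y = y from hyS, min_eq_left h2, max_eq_left h1]
    by_cases hbelow : ∃ x ∈ S, x < y
    · obtain ⟨x, hxS, hxy⟩ := hbelow
      -- everything in S is < y
      have hall : ∀ z ∈ S, z < y := by
        intro z hzS
        rcases lt_trichotomy z y with h1 | h1 | h1
        · exact h1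
        · exact absurd (h1 ▸ hzS) hyS
        · exact absurd (hA x hxS z hzS y hxy h1) hyS
      set u := sSup S with hu
      have hubdd : BddAbove S := ⟨y, fun w hw => le_of_lt (hall w hw)⟩
      have humem : u ∈ S := hSclosed.csSup_mem ⟨s0, hs0⟩ hubdd
      have huy : u < y := hall u humem
      have hgap : ∀ w ∈ Set.Ioi u, LocallyConstantAt π w := by
        intro w hw
        rcases h w with hwS | hwlc
        · exact absurd (le_csSup hubdd hwS) (not_le.mpr hw)
        · exact hwlc
      have hconstIoi : ∀ w ∈ Set.Ioi u, π w = π y :=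
        key π hcont _ isPreconnected_Ioi hgap huy
      have heq : Set.EqOn π (fun _ => π y) (closure (Set.Ioi u)) :=
        Set.EqOn.closure (fun w hw => hconstIoi w hw) hcont continuous_const
      rw [closure_Ioi] at heq
      have hu' : π u = π y := heq (Set.self_mem_Ici)
      have hπy : π y = u := by rw [← hu']; exact humem
      have hb : sSup ((↑) '' S : Set EReal) = (u : EReal) := by
        apply le_antisymm
        · exact sSup_le (by rintro _ ⟨w, hwS, rfl⟩; exact EReal.coe_le_coe_iff.mpr (le_csSup hubdd hwS))
        · exact le_sSup (Set.mem_image_of_mem _ humem)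
      have ha : sInf ((↑) '' S : Set EReal) ≤ (u : EReal) := sInf_le (Set.mem_image_of_mem _ humem)
      rw [hπy, hb, min_eq_right (EReal.coe_le_coe_iff.mpr (le_of_lt huy)), max_eq_left ha]
    · -- everything in S is > y
      have hall : ∀ z ∈ S, y < z := by
        intro z hzS
        rcases lt_trichotomy y z with h1 | h1 | h1
        · exact h1
        · exact absurd (h1 ▸ hzS) hyS
        · exact absurd ⟨z, hzS, h1⟩ hbelow
      set v := sInf S with hv
      have hvbdd : BddBelow S := ⟨y, fun w hw => le_of_lt (hall w hw)⟩
      have hvmem : v ∈ S := hSclosed.csInf_mem ⟨s0, hs0⟩ hvbdd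
      have hyv : y < v := hall v hvmem
      have hgap : ∀ w ∈ Set.Iio v, LocallyConstantAt π w := by
        intro w hw
        rcases h w with hwS | hwlc
        · exact absurd (csInf_le hvbdd hwS) (not_le.mpr hw)
        · exact hwlc
      have hconstIio : ∀ w ∈ Set.Iio v, π w = π y :=
        key π hcont _ isPreconnected_Iio hgap hyv
      have heq : Set.EqOn π (fun _ => π y) (closure (Set.Iio v)) :=
        Set.EqOn.closure (fun w hw => hconstIio w hw) hcont continuous_const
      rw [closure_Iio] at heq
      have hv' : π v = π y := heq (Set.self_mem_Iic)
      have hπy : π y = v := by rw [← hv']; exact hvmem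
      have ha : sInf ((↑) '' S : Set EReal) = (v : EReal) := by
        apply le_antisymm
        · exact sInf_le (Set.mem_image_of_mem _ hvmem)
        · exact le_sInf (by rintro _ ⟨w, hwS, rfl⟩; exact EReal.coe_le_coe_iff.mpr (csInf_le hvbdd hwS))
      have hymin : min (y : EReal) (sSup ((↑) '' S : Set EReal)) ≤ (v : EReal) :=
        le_trans (min_le_left _ _) (EReal.coe_le_coe_iff.mpr (le_of_lt hyv))
      rw [hπy, max_eq_right (ha ▸ hymin)]
      exact ha.symm
  · -- S empty: π locally constant everywhere, hence constant
    have hlc : ∀ x ∈ (Set.univ : Set ℝ), LocallyConstantAt π x := by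
      intro x _
      rcases h x with hx | hx
      · exact absurd hx (fun hx => hSne ⟨x, hx⟩)
      · exact hx
    have hconst : ∀ y, π y = π 0 :=
      fun y => key π hcont Set.univ isPreconnected_univ hlc (Set.mem_univ 0) y (Set.mem_univ y)
    refine ⟨(π 0 : ℝ), (π 0 : ℝ), le_refl _, fun y => ?_⟩
    rw [hconst y, max_eq_right (min_le_right _ _)]
end

section
/- If π : ℝ → ℝ is continuous, equals the identity outside the set O where it is locally constant, then O must be one of exactly five forms: ∅, ℝ, (-∞, a) for some a ∈ ℝ, (b, ∞) for some b ∈ ℝ, or (-∞, a) ∪ (b, ∞) for some reals a ≤ b. -/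
lemma lc_isOpen (π : ℝ → ℝ) : IsOpen {y : ℝ | LocallyConstantAt π y} := by
  rw [isOpen_iff_mem_nhds]
  rintro y ⟨ε, hε, hconst⟩
  have hsub : Set.Ioo (y - ε) (y + ε) ⊆ {y : ℝ | LocallyConstantAt π y} := by
    rintro x ⟨hx1, hx2⟩
    refine ⟨min (x - (y - ε)) ((y + ε) - x), by simp; constructor <;> linarith, ?_⟩
    rintro x' ⟨h1, h2⟩
    have m1 := min_le_left (x - (y - ε)) ((y + ε) - x)
    have m2 := min_le_right (x - (y - ε)) ((y + ε) - x)
    rw [hconst x' ⟨by linarith, by linarith⟩, hconst x ⟨by linarith, by linarith⟩]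
  exact Filter.mem_of_superset (Ioo_mem_nhds (by linarith) (by linarith)) hsub

lemma compl_ordConnected (π : ℝ → ℝ) (hcont : Continuous π)
    (O : Set ℝ) (hO : O = {y : ℝ | LocallyConstantAt π y})
    (hid : ∀ y ∉ O, π y = y) : Oᶜ.OrdConnected := by
  have hOopen : IsOpen O := hO ▸ lc_isOpen π
  have hCclosed : IsClosed Oᶜ := hOopen.isClosed_compl
  constructor
  rintro x hx z hz t ⟨htx, htz⟩
  by_contra hy
  simp only [Set.mem_compl_iff, not_not] at hy hx hz
  set y := t with hyt
  -- y ∈ O, x ≤ y ≤ z, x z ∉ O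
  have hxy : x < y := lt_of_le_of_ne htx (by rintro rfl; exact hx hy)
  have hyz : y < z := lt_of_le_of_ne htz (by rintro rfl; exact hz hy)
  set A := Oᶜ ∩ Set.Iic y with hA
  set B := Oᶜ ∩ Set.Ici y with hB
  have hAne : A.Nonempty := ⟨x, hx, le_of_lt hxy⟩
  have hBne : B.Nonempty := ⟨z, hz, le_of_lt hyz⟩
  have hAbdd : BddAbove A := ⟨y, fun a ha => ha.2⟩
  have hBbdd : BddBelow B := ⟨y, fun b hb => hb.2⟩
  have hAclosed : IsClosed A := hCclosed.inter isClosed_Iic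
  have hBclosed : IsClosed B := hCclosed.inter isClosed_Ici
  set c := sSup A with hc
  set d := sInf B with hd
  have hcA : c ∈ A := hAclosed.csSup_mem hAne hAbdd
  have hdB : d ∈ B := hBclosed.csInf_mem hBne hBbdd
  have hcy : c < y := lt_of_le_of_ne hcA.2 (by intro h; rw [h] at hcA; exact hcA.1 hy)
  have hyd : y < d := lt_of_le_of_ne hdB.2 (by intro h; exact hdB.1 (h ▸ hy))
  have hIooO : Set.Ioo c d ⊆ O := by
    intro s hs
    by_contra hsO
    rcases le_total s y with h | h
    · exact absurd (le_csSup hAbdd ⟨hsO, h⟩) (not_le.2 hs.1)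
    · exact absurd (csInf_le hBbdd ⟨hsO, h⟩) (not_le.2 hs.2)
  -- π is constant on Ioo c d
  set U := {s : ℝ | s ∈ O ∧ π s = π y} with hU
  set V := {s : ℝ | π s ≠ π y} with hV
  have hUopen : IsOpen U := by
    rw [isOpen_iff_mem_nhds]
    rintro s ⟨hsO, hsv⟩
    have hs' := hsO
    rw [hO] at hs'
    obtain ⟨ε, hε, hconst⟩ := hs'
    have h1 : Set.Ioo (s - ε) (s + ε) ∩ O ∈ nhds s :=
      Filter.inter_mem (Ioo_mem_nhds (by linarith) (by linarith)) (hOopen.mem_nhds hsO)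
    refine Filter.mem_of_superset h1 ?_
    rintro w ⟨⟨hw1, hw2⟩, hwO⟩
    exact ⟨hwO, by rw [hconst w ⟨le_of_lt hw1, le_of_lt hw2⟩]; exact hsv⟩
  have hVopen : IsOpen V := isOpen_ne_fun hcont continuous_const
  have hdisj : Disjoint U V := by
    rw [Set.disjoint_left]; rintro s hs hs'; exact hs' hs.2
  have hcover : Set.Ioo c d ⊆ U ∪ V := by
    intro s hs
    by_cases h : π s = π y
    · exact Or.inl ⟨hIooO hs, h⟩
    · exact Or.inr h
  have hyU : (Set.Ioo c d ∩ U).Nonempty := ⟨y, ⟨hcy, hyd⟩, hy, rfl⟩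
  have hsubU : Set.Ioo c d ⊆ U :=
    isPreconnected_Ioo.subset_left_of_subset_union hUopen hVopen hdisj hcover hyU
  have heq : Set.EqOn π (fun _ => π y) (Set.Ioo c d) := fun s hs => (hsubU hs).2
  have heq2 : Set.EqOn π (fun _ => π y) (Set.Icc c d) := by
    have := heq.closure hcont continuous_const
    rwa [closure_Ioo (ne_of_lt (hcy.trans hyd))] at this
  have hπc : π c = π y := heq2 ⟨le_refl c, le_of_lt (hcy.trans hyd)⟩
  have hπd : π d = π y := heq2 ⟨le_of_lt (hcy.trans hyd), le_refl d⟩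
  have hc' : π c = c := hid c hcA.1
  have hd' : π d = d := hid d hdB.1
  have : c = d := by rw [← hc', ← hd', hπc, hπd]
  linarith [hcy.trans hyd]

/-- If `π` is continuous and equals the identity outside the set `O` of points where it is
locally constant, then `O` has one of exactly five forms. -/
theorem stmt3 (π : ℝ → ℝ) (hcont : Continuous π)
    (O : Set ℝ) (hO : O = {y : ℝ | LocallyConstantAt π y})
    (hid : ∀ y ∉ O, π y = y) :
    O = ∅ ∨ O = Set.univ ∨ (∃ a : ℝ, O = Set.Iio a) ∨ (∃ b : ℝ, O = Set.Ioi b) ∨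
      (∃ a b : ℝ, a ≤ b ∧ O = Set.Iio a ∪ Set.Ioi b) := by
  have hOopen : IsOpen O := hO ▸ lc_isOpen π
  have hord : Oᶜ.OrdConnected := compl_ordConnected π hcont O hO hid
  have hCclosed : IsClosed Oᶜ := hOopen.isClosed_compl
  have hpre : IsPreconnected Oᶜ := isPreconnected_iff_ordConnected.mpr hord
  rcases Set.eq_empty_or_nonempty Oᶜ with hemp | hne
  · right; left; rw [← Set.compl_empty_iff, hemp]
  have hmem := hpre.mem_intervals
  simp only [Set.mem_insert_iff, Set.mem_singleton_iff] at hmem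
  set a := sInf Oᶜ
  set b := sSup Oᶜ
  rcases hmem with h | h | h | h | h | h | h | h | h | h
  · -- Icc a b
    right; right; right; right
    refine ⟨a, b, ?_, ?_⟩
    · rcases hne with ⟨w, hw⟩; rw [h] at hw; exact hw.1.trans hw.2
    · rw [← compl_compl O, h]
      ext x
      simp only [Set.mem_compl_iff, Set.mem_Icc, Set.mem_union, Set.mem_Iio, Set.mem_Ioi,
        not_and_or, not_le]
  · -- Ico a b : not closed unless empty
    exfalso
    have hab : a < b := by
      rcases hne with ⟨w, hw⟩; rw [h] at hw; exact lt_of_le_of_lt hw.1 hw.2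
    have : b ∈ Oᶜ := by
      rw [← hCclosed.closure_eq, h, closure_Ico (ne_of_lt hab)]
      exact ⟨le_of_lt hab, le_refl b⟩
    rw [h] at this; exact absurd this.2 (lt_irrefl b)
  · -- Ioc a b
    exfalso
    have hab : a < b := by
      rcases hne with ⟨w, hw⟩; rw [h] at hw; exact lt_of_lt_of_le hw.1 hw.2
    have : a ∈ Oᶜ := by
      rw [← hCclosed.closure_eq, h, closure_Ioc (ne_of_lt hab)]
      exact ⟨le_refl a, le_of_lt hab⟩
    rw [h] at this; exact absurd this.1 (lt_irrefl a)
  · -- Ioo a b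
    exfalso
    have hab : a < b := by
      rcases hne with ⟨w, hw⟩; rw [h] at hw; exact hw.1.trans hw.2
    have : a ∈ Oᶜ := by
      rw [← hCclosed.closure_eq, h, closure_Ioo (ne_of_lt hab)]
      exact ⟨le_refl a, le_of_lt hab⟩
    rw [h] at this; exact absurd this.1 (lt_irrefl a)
  · -- Ici a
    right; right; left
    exact ⟨a, by rw [← Set.compl_Ici, ← h, compl_compl]⟩
  · -- Ioi a : not closed
    exfalso
    have : a ∈ Oᶜ := by
      rw [← hCclosed.closure_eq, h, closure_Ioi]
      exact le_refl a
    rw [h] at this; exact absurd this (lt_irrefl a)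
  · -- Iic b
    right; right; right; left
    exact ⟨b, by rw [← Set.compl_Iic, ← h, compl_compl]⟩
  · -- Iio b : not closed
    exfalso
    have : b ∈ Oᶜ := by
      rw [← hCclosed.closure_eq, h, closure_Iio]
      exact le_refl b
    rw [h] at this; exact absurd this (lt_irrefl b)
  · -- univ
    left; rw [← compl_compl O, h, Set.compl_univ]
  · -- empty
    exact absurd h (Set.nonempty_iff_ne_empty.mp hne)
end

section
/- (Hyperplane Comparison Lemma) Let x₁, …, x_n ∈ ℝᵈ be public points and S₁, …, S_{d+1} ⊆ [n] be nonempty pairwise disjoint index sets such that the point sets X_t = {x_i : i ∈ S_t} are well separable in ℝᵈ. Then for any two distinct affine functions β¹, β² : ℝᵈ → ℝ (i.e., β(x) = ⟨β₁, x⟩ + β₀ with (β₁, β₀) distinct), there exists t ∈ [d+1] such that either β¹(x_i) < β²(x_i) for all i ∈ S_t, or β¹(x_i) > β²(x_i) for all i ∈ S_t. -/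
/-- Evaluation of the affine function `β(p) = ⟨β₁, p⟩ + β₀`. -/
def affEval {d : ℕ} (β : (Fin d → ℝ) × ℝ) (p : Fin d → ℝ) : ℝ :=
  (∑ j, β.1 j * p j) + β.2

/-- The sets `X 0, …, X (m-1)` in `ℝᵈ` are well separable: for all disjoint index sets
`I, J`, some hyperplane strictly separates `⋃_{t ∈ I} X t` from `⋃_{t ∈ J} X t`. -/
def WellSeparable {d m : ℕ} (X : Fin m → Set (Fin d → ℝ)) : Prop :=
  ∀ I J : Finset (Fin m), Disjoint I J →
    ∃ (w : Fin d → ℝ) (c : ℝ),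
      (∀ t ∈ I, ∀ p ∈ X t, (∑ j, w j * p j) < c) ∧
      (∀ t ∈ J, ∀ p ∈ X t, c < (∑ j, w j * p j))

/-- distribute a linear evaluation over a two-point combination -/
lemma sum_combo {d : ℕ} (w : Fin d → ℝ) (u v : ℝ) (p1 p2 : Fin d → ℝ) :
    ∑ j, w j * (u * p1 j + v * p2 j)
      = u * (∑ j, w j * p1 j) + v * (∑ j, w j * p2 j) := by
  rw [Finset.mul_sum, Finset.mul_sum, ← Finset.sum_add_distrib]
  exact Finset.sum_congr rfl fun _ _ => by ring

lemma convex_lt {u v L1 L2 c : ℝ} (hu : 0 ≤ u) (hv : 0 ≤ v) (huv : u + v = 1)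
    (h1 : L1 < c) (h2 : L2 < c) : u * L1 + v * L2 < c := by
  rcases eq_or_lt_of_le hu with h | h
  · have : v = 1 := by linarith
    simp [← h, this]; linarith
  · have h3 : u * L1 < u * c := mul_lt_mul_of_pos_left h1 h
    have h4 : v * L2 ≤ v * c := mul_le_mul_of_nonneg_left h2.le hv
    have h5 : u * c + v * c = c := by rw [← add_mul, huv, one_mul]
    linarith

/-- IVT-style: if an affine function is ≥ 0 at p1 and ≤ 0 at p2, it vanishes at a
convex combination. -/
lemma combo_zero {d : ℕ} (w : Fin d → ℝ) (e : ℝ) (p1 p2 : Fin d → ℝ)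
    (h1 : 0 ≤ (∑ j, w j * p1 j) + e) (h2 : (∑ j, w j * p2 j) + e ≤ 0) :
    ∃ u v : ℝ, 0 ≤ u ∧ 0 ≤ v ∧ u + v = 1 ∧
      (∑ j, w j * (u * p1 j + v * p2 j)) + e = 0 := by
  set a : ℝ := (∑ j, w j * p1 j) + e with ha
  set b : ℝ := -((∑ j, w j * p2 j) + e) with hb
  have hb0 : 0 ≤ b := by simp [hb]; linarith
  rcases eq_or_lt_of_le (by linarith : (0:ℝ) ≤ a + b) with hab | hab
  · refine ⟨1, 0, by norm_num, by norm_num, by norm_num, ?_⟩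
    rw [sum_combo]
    have : a = 0 := by linarith
    simp; linarith [this]
  · refine ⟨b / (a + b), a / (a + b), by positivity, by positivity, by rw [← add_div, add_comm, div_self hab.ne'], ?_⟩
    rw [sum_combo]
    have h1' : (∑ j, w j * p1 j) = a - e := by rw [ha]; ring
    have h2' : (∑ j, w j * p2 j) = -b - e := by rw [hb]; ring
    rw [h1', h2']; field_simp; ring

/-- d+1 points on the affine hyperplane {p : ⟨w,p⟩ + e = 0} (w ≠ 0) are affinely
dependent. -/
lemma exists_dep {d : ℕ} (w : Fin d → ℝ) (e : ℝ) (hw : w ≠ 0)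
    (q : Fin (d + 1) → Fin d → ℝ) (hq : ∀ t, (∑ j, w j * q t j) + e = 0) :
    ∃ g : Fin (d + 1) → ℝ, (∑ t, g t = 0) ∧ (∀ j, ∑ t, g t * q t j = 0) ∧ g ≠ 0 := by
  set φ : ((Fin d → ℝ) × ℝ) →ₗ[ℝ] ℝ :=
    { toFun := fun m => (∑ j, w j * m.1 j) + e * m.2
      map_add' := by
        intro m m'
        simp only [Prod.fst_add, Prod.snd_add, Pi.add_apply, mul_add]
        rw [Finset.sum_add_distrib]; ring
      map_smul' := by
        intro c m
        simp only [Prod.smul_fst, Prod.smul_snd, Pi.smul_apply, smul_eq_mul,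
          RingHom.id_apply, Finset.mul_sum]
        rw [mul_add, Finset.mul_sum]
        congr 1
        · exact Finset.sum_congr rfl fun j _ => by ring
        · ring } with hφ
  have hφne : φ ≠ 0 := by
    obtain ⟨j, hj⟩ := Function.ne_iff.mp hw
    intro h0
    have := congrArg (fun f => f (Pi.single j 1, 0)) h0
    simp only [hφ, LinearMap.coe_mk, AddHom.coe_mk, LinearMap.zero_apply] at this
    rw [Finset.sum_eq_single j (fun b _ hb => by simp [Pi.single_apply, hb])
      (by simp)] at this
    simp [Pi.single_apply] at this
    exact hj this
  have hker : ∀ t, ((q t, 1) : (Fin d → ℝ) × ℝ) ∈ LinearMap.ker φ := by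
    intro t
    simp only [LinearMap.mem_ker, hφ, LinearMap.coe_mk, AddHom.coe_mk]
    simpa using hq t
  set v' : Fin (d + 1) → LinearMap.ker φ := fun t => ⟨(q t, 1), hker t⟩ with hv'
  have hnli : ¬ LinearIndependent ℝ v' := by
    intro hli
    have hcard := hli.fintype_card_le_finrank
    have hlt : Module.finrank ℝ (LinearMap.ker φ) <
        Module.finrank ℝ ((Fin d → ℝ) × ℝ) := by
      apply Submodule.finrank_lt
      exact (fun h => hφne (LinearMap.ker_eq_top.mp h))
    have : Module.finrank ℝ ((Fin d → ℝ) × ℝ) = d + 1 := by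
      rw [Module.finrank_prod, Module.finrank_fin_fun, Module.finrank_self]
    simp [Fintype.card_fin, this] at hcard hlt
    omega
  obtain ⟨g, hg0, i, hgi⟩ := Fintype.not_linearIndependent_iff.mp hnli
  refine ⟨g, ?_, ?_, ?_⟩
  · have := congrArg (fun m : LinearMap.ker φ => (m : (Fin d → ℝ) × ℝ).2) hg0
    simpa [hv', Prod.snd_sum] using this
  · intro j
    have := congrArg (fun m : LinearMap.ker φ => (m : (Fin d → ℝ) × ℝ).1 j) hg0
    simpa [hv', Prod.fst_sum, Finset.sum_apply] using this
  · exact Function.ne_iff.mpr ⟨i, hgi⟩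

lemma convex_gt {u v L1 L2 c : ℝ} (hu : 0 ≤ u) (hv : 0 ≤ v) (huv : u + v = 1)
    (h1 : c < L1) (h2 : c < L2) : c < u * L1 + v * L2 := by
  rcases eq_or_lt_of_le hu with h | h
  · have : v = 1 := by linarith
    simp [← h, this]; linarith
  · have h3 : u * c < u * L1 := mul_lt_mul_of_pos_left h1 h
    have h4 : v * c ≤ v * L2 := mul_le_mul_of_nonneg_left h2.le hv
    have h5 : u * c + v * c = c := by rw [← add_mul, huv, one_mul]
    linarith



/-- Hyperplane Comparison Lemma: given publicly separable sets of agents and two distinct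
affine functions, on some set `S t` one of the two functions is pointwise strictly below
the other. -/
theorem stmt5 (d n : ℕ) (x : Fin n → Fin d → ℝ) (S : Fin (d + 1) → Finset (Fin n))
    (hne : ∀ t, (S t).Nonempty)
    (hdisj : ∀ t t', t ≠ t' → Disjoint (S t) (S t'))
    (hsep : WellSeparable (fun t => x '' ↑(S t)))
    (β1 β2 : (Fin d → ℝ) × ℝ) (hβ : β1 ≠ β2) :
    ∃ t, (∀ i ∈ S t, affEval β1 (x i) < affEval β2 (x i)) ∨
         (∀ i ∈ S t, affEval β2 (x i) < affEval β1 (x i)) := by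
  classical
  set w : Fin d → ℝ := fun j => β1.1 j - β2.1 j with hwdef
  set e : ℝ := β1.2 - β2.2 with hedef
  have hdelta : ∀ p : Fin d → ℝ,
      affEval β1 p - affEval β2 p = (∑ j, w j * p j) + e := by
    intro p
    simp only [affEval, hwdef, hedef, sub_mul, Finset.sum_sub_distrib]
    ring
  by_cases hw : w = 0
  · have hsum0 : ∀ p : Fin d → ℝ, (∑ j, w j * p j) = 0 := by
      intro p; rw [hw]; simp
    have he : e ≠ 0 := by
      intro h0
      apply hβ
      have h11 : β1.1 = β2.1 := funext fun j => by
        have := congrFun hw j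
        simpa [hwdef, sub_eq_zero] using this
      have h12 : β1.2 = β2.2 := by
        have : β1.2 - β2.2 = 0 := by rw [← hedef]; exact h0
        linarith
      exact Prod.ext h11 h12
    rcases lt_or_gt_of_ne he with hlt | hgt
    · exact ⟨0, Or.inl fun i _ => by
        have h := hdelta (x i); rw [hsum0 (x i)] at h; linarith⟩
    · exact ⟨0, Or.inr fun i _ => by
        have h := hdelta (x i); rw [hsum0 (x i)] at h; linarith⟩
  · by_contra hcon
    push_neg at hcon
    have H : ∀ t, ∃ a, a ∈ S t ∧ ∃ b, b ∈ S t ∧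
        0 ≤ (∑ j, w j * x a j) + e ∧ (∑ j, w j * x b j) + e ≤ 0 := by
      intro t
      obtain ⟨⟨a, ha, hA⟩, ⟨b, hb, hB⟩⟩ := hcon t
      exact ⟨a, ha, b, hb,
        by have := hdelta (x a); linarith,
        by have := hdelta (x b); linarith⟩
    choose i1 hi1 i2 hi2 hA hB using H
    have HQ : ∀ t, ∃ u v : ℝ, 0 ≤ u ∧ 0 ≤ v ∧ u + v = 1 ∧
        (∑ j, w j * (u * x (i1 t) j + v * x (i2 t) j)) + e = 0 :=
      fun t => combo_zero w e _ _ (hA t) (hB t)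
    choose u v hu hv huv hq using HQ
    set q : Fin (d + 1) → Fin d → ℝ :=
      fun t j => u t * x (i1 t) j + v t * x (i2 t) j with hqdef
    obtain ⟨g, hgsum, hgq, hgne⟩ := exists_dep w e hw q hq
    set I : Finset (Fin (d + 1)) := Finset.univ.filter (fun t => 0 < g t) with hI
    set J : Finset (Fin (d + 1)) := Finset.univ.filter (fun t => g t < 0) with hJ
    have hIJ : Disjoint I J := by
      rw [Finset.disjoint_left]
      intro t ht ht'
      simp only [hI, hJ, Finset.mem_filter, Finset.mem_univ, true_and] at ht ht'
      linarith
    have hgzero : ∀ t, t ∉ I → t ∉ J → g t = 0 := by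
      intro t h1 h2
      simp only [hI, hJ, Finset.mem_filter, Finset.mem_univ, true_and, not_lt] at h1 h2
      linarith
    have hsplit : ∀ f : Fin (d + 1) → ℝ, (∀ t, g t = 0 → f t = 0) →
        ∑ t, f t = ∑ t ∈ I, f t + ∑ t ∈ J, f t := by
      intro f hf
      rw [← Finset.sum_union hIJ]
      symm
      apply Finset.sum_subset (Finset.subset_univ _)
      intro t _ ht
      rw [Finset.mem_union] at ht
      push_neg at ht
      exact hf t (hgzero t ht.1 ht.2)
    have hgsplit : ∑ t ∈ I, g t + ∑ t ∈ J, g t = 0 := by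
      rw [← hsplit g (fun _ h => h)]; exact hgsum
    obtain ⟨t0, ht0⟩ := Function.ne_iff.mp hgne
    have hInonempty : I.Nonempty := by
      by_contra hIe
      rw [Finset.not_nonempty_iff_eq_empty] at hIe
      have hneg : ∀ t, g t ≤ 0 := by
        intro t
        by_contra hh
        push_neg at hh
        have : t ∈ I := by
          simp only [hI, Finset.mem_filter, Finset.mem_univ, true_and]; exact hh
        rw [hIe] at this; simp at this
      have ht0' : g t0 < 0 := lt_of_le_of_ne (hneg t0) ht0
      have : ∑ t, g t < ∑ _t : Fin (d + 1), (0 : ℝ) :=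
        Finset.sum_lt_sum (fun t _ => hneg t) ⟨t0, Finset.mem_univ _, ht0'⟩
      simp at this
      linarith [hgsum]
    have hJnonempty : J.Nonempty := by
      by_contra hJe
      rw [Finset.not_nonempty_iff_eq_empty] at hJe
      have hpos : ∀ t, 0 ≤ g t := by
        intro t
        by_contra hh
        push_neg at hh
        have : t ∈ J := by
          simp only [hJ, Finset.mem_filter, Finset.mem_univ, true_and]; exact hh
        rw [hJe] at this; simp at this
      have ht0' : 0 < g t0 := lt_of_le_of_ne (hpos t0) (Ne.symm ht0)
      have : ∑ _t : Fin (d + 1), (0 : ℝ) < ∑ t, g t :=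
        Finset.sum_lt_sum (fun t _ => hpos t) ⟨t0, Finset.mem_univ _, ht0'⟩
      simp at this
      linarith [hgsum]
    obtain ⟨w', c', hsepI, hsepJ⟩ := hsep I J hIJ
    have hLI : ∀ t ∈ I, (∑ j, w' j * q t j) < c' := by
      intro t ht
      have h1 : (∑ j, w' j * x (i1 t) j) < c' :=
        hsepI t ht _ ⟨i1 t, Finset.mem_coe.mpr (hi1 t), rfl⟩
      have h2 : (∑ j, w' j * x (i2 t) j) < c' :=
        hsepI t ht _ ⟨i2 t, Finset.mem_coe.mpr (hi2 t), rfl⟩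
      have hs : (∑ j, w' j * q t j)
          = u t * (∑ j, w' j * x (i1 t) j) + v t * (∑ j, w' j * x (i2 t) j) := by
        simp only [hqdef]
        exact sum_combo w' (u t) (v t) _ _
      rw [hs]
      exact convex_lt (hu t) (hv t) (huv t) h1 h2
    have hLJ : ∀ t ∈ J, c' < (∑ j, w' j * q t j) := by
      intro t ht
      have h1 : c' < (∑ j, w' j * x (i1 t) j) :=
        hsepJ t ht _ ⟨i1 t, Finset.mem_coe.mpr (hi1 t), rfl⟩
      have h2 : c' < (∑ j, w' j * x (i2 t) j) :=
        hsepJ t ht _ ⟨i2 t, Finset.mem_coe.mpr (hi2 t), rfl⟩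
      have hs : (∑ j, w' j * q t j)
          = u t * (∑ j, w' j * x (i1 t) j) + v t * (∑ j, w' j * x (i2 t) j) := by
        simp only [hqdef]
        exact sum_combo w' (u t) (v t) _ _
      rw [hs]
      exact convex_gt (hu t) (hv t) (huv t) h1 h2
    have hzero : ∑ t, g t * (∑ j, w' j * q t j) = 0 := by
      have hrw : ∀ t ∈ Finset.univ,
          g t * (∑ j, w' j * q t j) = ∑ j, w' j * (g t * q t j) := by
        intro t _
        rw [Finset.mul_sum]
        exact Finset.sum_congr rfl fun j _ => by ring
      rw [Finset.sum_congr rfl hrw, Finset.sum_comm]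
      apply Finset.sum_eq_zero
      intro j _
      rw [← Finset.mul_sum, hgq j, mul_zero]
    have h1 : ∑ t ∈ I, g t * (∑ j, w' j * q t j) < ∑ t ∈ I, g t * c' :=
      Finset.sum_lt_sum_of_nonempty hInonempty (fun t ht => by
        have hg : 0 < g t := by
          have := ht
          simp only [hI, Finset.mem_filter, Finset.mem_univ, true_and] at this
          exact this
        exact mul_lt_mul_of_pos_left (hLI t ht) hg)
    have h2 : ∑ t ∈ J, g t * (∑ j, w' j * q t j) < ∑ t ∈ J, g t * c' :=
      Finset.sum_lt_sum_of_nonempty hJnonempty (fun t ht => by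
        have hg : g t < 0 := by
          have := ht
          simp only [hJ, Finset.mem_filter, Finset.mem_univ, true_and] at this
          exact this
        exact mul_lt_mul_of_neg_left (hLJ t ht) hg)
    have hsplitL := hsplit (fun t => g t * (∑ j, w' j * q t j))
      (fun t h => by simp only [h, zero_mul])
    have hc : ∑ t ∈ I, g t * c' + ∑ t ∈ J, g t * c' = 0 := by
      rw [← Finset.sum_mul, ← Finset.sum_mul, ← add_mul, hgsplit, zero_mul]
    linarith [hzero, hsplitL, h1, h2, hc]
end

section
/- Uniqueness of resistant hyperplanes: Let x₁, …, x_n ∈ ℝᵈ and S₁, …, S_{d+1} ⊆ [n] nonempty pairwise disjoint with {x_i : i ∈ S_t} well separable in ℝᵈ. Fix y ∈ ℝⁿ and k_t ∈ [|S_t|] for each t. Then there is at most one affine function β : ℝᵈ → ℝ such that for every t ∈ [d+1], the k_t-th smallest residual among {y_i − β(x_i) : i ∈ S_t} equals zero. -/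
/-- The `k`-th smallest value of the multiset `{r i : i ∈ s}` (1-indexed). -/
noncomputable def kthSmallest {n : ℕ} (s : Finset (Fin n)) (r : Fin n → ℝ) (k : ℕ) : ℝ :=
  (Multiset.sort (s.val.map r) (· ≤ ·)).getD (k - 1) 0

lemma countP_sorted_le {l : List ℝ} (hs : l.Pairwise (· ≤ ·)) (j : ℕ) (hj : j < l.length)
    (c : ℝ) (hc : c ≤ l[j]) : Multiset.countP (· < c) (l : Multiset ℝ) ≤ j := by
  rw [Multiset.coe_countP]
  have htad := l.take_append_drop j
  calc l.countP (· < c) = (l.take j).countP (· < c) + (l.drop j).countP (· < c) := by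
        conv_lhs => rw [← htad]; rw [List.countP_append]
    _ ≤ j + 0 := by
        apply Nat.add_le_add
        · calc (l.take j).countP (· < c) ≤ (l.take j).length := List.countP_le_length
            _ ≤ j := by simp
        · apply Nat.le_of_eq
          rw [List.countP_eq_zero]
          intro a ha
          obtain ⟨i, hi, rfl⟩ := List.mem_iff_getElem.1 ha
          have h2 : j + i < l.length := by
            have := (List.length_drop (i := j) (l := l)) ▸ hi; omega
          have : l[j] ≤ (l.drop j)[i] := by
            rw [List.getElem_drop]
            exact hs.rel_get_of_le (a := ⟨j, hj⟩) (b := ⟨j+i, h2⟩) (by simp)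
          simp only [decide_eq_true_eq]
          push_neg
          linarith
    _ = j := by omega

lemma countP_sorted_ge {l : List ℝ} (hs : l.Pairwise (· ≤ ·)) (j : ℕ) (hj : j < l.length)
    (c : ℝ) (hc : l[j] ≤ c) : j + 1 ≤ Multiset.countP (· ≤ c) (l : Multiset ℝ) := by
  rw [Multiset.coe_countP]
  have htad := l.take_append_drop (j+1)
  calc j + 1 = (l.take (j+1)).countP (· ≤ c) := by
        rw [eq_comm, List.countP_eq_length.2, List.length_take]; omega
        intro a ha
        obtain ⟨i, hi, rfl⟩ := List.mem_iff_getElem.1 ha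
        have hil : i < l.length := by
          have := (List.length_take (i := j+1) (l := l)) ▸ hi
          omega
        have he : (l.take (j+1))[i] = l[i] := List.getElem_take
        rw [he]
        have hij : i ≤ j := by
          have := (List.length_take (i := j+1) (l := l)) ▸ hi; omega
        have : l[i] ≤ l[j] := hs.rel_get_of_le (a := ⟨i, hil⟩) (b := ⟨j, hj⟩) hij
        simp only [decide_eq_true_eq]; linarith
    _ ≤ l.countP (· ≤ c) := by
        conv_rhs => rw [← htad, List.countP_append]
        omega

lemma kth_lt_kth {n : ℕ} {s : Finset (Fin n)} {f g : Fin n → ℝ} {k : ℕ}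
    (hk1 : 1 ≤ k) (hk2 : k ≤ s.card) (hfg : ∀ i ∈ s, f i < g i) :
    kthSmallest s f k < kthSmallest s g k := by
  classical
  set j := k - 1 with hjdef
  set l1 := Multiset.sort (s.val.map f) (· ≤ ·) with hl1
  set l2 := Multiset.sort (s.val.map g) (· ≤ ·) with hl2
  have hlen1 : l1.length = s.card := by simp [hl1, Multiset.length_sort]
  have hlen2 : l2.length = s.card := by simp [hl2, Multiset.length_sort]
  have hj1 : j < l1.length := by omega
  have hj2 : j < l2.length := by omega
  have e1 : kthSmallest s f k = l1[j] := List.getD_eq_getElem _ _ hj1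
  have e2 : kthSmallest s g k = l2[j] := List.getD_eq_getElem _ _ hj2
  rw [e1, e2]
  by_contra hcon
  push_neg at hcon
  set c := l2[j] with hc
  have count1 : j + 1 ≤ Multiset.countP (· ≤ c) (l2 : Multiset ℝ) :=
    countP_sorted_ge (Multiset.pairwise_sort _ _) j hj2 c le_rfl
  have count2 : Multiset.countP (· < c) (l1 : Multiset ℝ) ≤ j :=
    countP_sorted_le (Multiset.pairwise_sort _ _) j hj1 c hcon
  rw [hl2, Multiset.sort_eq] at count1
  rw [hl1, Multiset.sort_eq] at count2
  have bridge : Multiset.countP (· ≤ c) (s.val.map g) ≤ Multiset.countP (· < c) (s.val.map f) := by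
    rw [Multiset.countP_map, Multiset.countP_map]
    have hsub : (s.filter fun i => g i ≤ c) ⊆ s.filter fun i => f i < c := by
      intro i hi
      rw [Finset.mem_filter] at hi ⊢
      exact ⟨hi.1, lt_of_lt_of_le (hfg i hi.1) hi.2⟩
    have h3 := Finset.card_le_card hsub
    rw [Finset.card_filter, Finset.card_filter] at h3
    simp at h3 ⊢
    exact h3
  omega

lemma lin_helper {d : ℕ} (a p q : Fin d → ℝ) (μ ν : ℝ) :
    (∑ j, a j * (μ • p + ν • q) j) = μ * (∑ j, a j * p j) + ν * (∑ j, a j * q j) := by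
  rw [Finset.mul_sum, Finset.mul_sum, ← Finset.sum_add_distrib]
  exact Finset.sum_congr rfl fun j _ => by simp; ring

def linmap {d : ℕ} (a : Fin d → ℝ) : (Fin d → ℝ) →ₗ[ℝ] ℝ where
  toFun v := ∑ j, a j * v j
  map_add' u v := by simp [mul_add, Finset.sum_add_distrib]
  map_smul' c v := by
    simp only [Finset.mul_sum, smul_eq_mul, RingHom.id_apply, Pi.smul_apply]
    exact Finset.sum_congr rfl fun j _ => by ring

lemma exists_onesided {d n : ℕ} (x : Fin n → Fin d → ℝ) (S : Fin (d + 1) → Finset (Fin n))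
    (hsep : WellSeparable (fun t => x '' ↑(S t)))
    (a : Fin d → ℝ) (b : ℝ) (hab : ¬(a = 0 ∧ b = 0)) :
    ∃ t, (∀ i ∈ S t, (∑ j, a j * x i j) + b < 0) ∨ (∀ i ∈ S t, 0 < (∑ j, a j * x i j) + b) := by
  classical
  by_contra hcon
  push_neg at hcon
  -- extract two-sided points
  have hPex : ∀ t, ∃ i ∈ S t, 0 ≤ (∑ j, a j * x i j) + b := by
    intro t
    obtain ⟨⟨i, hi, hi2⟩, _⟩ := hcon t
    exact ⟨i, hi, hi2⟩
  have hQex : ∀ t, ∃ i ∈ S t, (∑ j, a j * x i j) + b ≤ 0 := by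
    intro t
    obtain ⟨_, ⟨i, hi, hi2⟩⟩ := hcon t
    exact ⟨i, hi, hi2⟩
  choose P hPmem hPpos using hPex
  choose Q hQmem hQneg using hQex
  -- a ≠ 0
  by_cases ha : a = 0
  · subst ha
    have h1 := hPpos 0
    have h2 := hQneg 0
    simp only [Pi.zero_apply, zero_mul, Finset.sum_const_zero, zero_add] at h1 h2
    exact hab ⟨rfl, le_antisymm h2 h1⟩
  obtain ⟨j0, hj0⟩ : ∃ j, a j ≠ 0 := Function.ne_iff.1 ha
  -- crossing points
  set A : Fin (d+1) → ℝ := fun t => (∑ j, a j * x (Q t) j) + b with hA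
  set B : Fin (d+1) → ℝ := fun t => (∑ j, a j * x (P t) j) + b with hB
  have hA0 : ∀ t, A t ≤ 0 := fun t => hQneg t
  have hB0 : ∀ t, 0 ≤ B t := fun t => hPpos t
  set lam : Fin (d+1) → ℝ := fun t => if A t < B t then (-(A t))/(B t - A t) else 0 with hlam
  have hlam0 : ∀ t, 0 ≤ lam t := by
    intro t
    rw [hlam]
    dsimp only
    split_ifs with h
    · exact div_nonneg (by linarith [hA0 t]) (by linarith)
    · exact le_rfl
  have hlam1 : ∀ t, lam t ≤ 1 := by
    intro t
    rw [hlam]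
    dsimp only
    split_ifs with h
    · rw [div_le_one (by linarith)]
      linarith [hB0 t]
    · exact zero_le_one
  have key : ∀ (u v : ℝ), u ≤ 0 → 0 ≤ v →
      (1 - (if u < v then -u/(v-u) else 0)) * u + (if u < v then -u/(v-u) else 0) * v = 0 := by
    intro u v hu hv
    split_ifs with h
    · have hne : v - u ≠ 0 := by linarith
      field_simp
      ring
    · have h1 : u = 0 := le_antisymm hu (le_trans hv (not_lt.1 h))
      simp [h1]
  have hcomb : ∀ t, (1 - lam t) * A t + lam t * B t = 0 := by
    intro t
    rw [hlam]
    dsimp only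
    exact key (A t) (B t) (hA0 t) (hB0 t)
  set r : Fin (d+1) → (Fin d → ℝ) := fun t => (1 - lam t) • x (Q t) + lam t • x (P t) with hr
  have hrzero : ∀ t, (∑ j, a j * r t j) + b = 0 := by
    intro t
    rw [hr]
    dsimp only
    rw [lin_helper]
    have := hcomb t
    rw [hA, hB] at this
    dsimp only at this
    linarith [this]
  -- affine dependence
  have hnotAI : ¬ AffineIndependent ℝ r := by
    intro hAI
    rw [affineIndependent_iff_linearIndependent_vsub ℝ r 0] at hAI
    set v : {t : Fin (d+1) // t ≠ 0} → (Fin d → ℝ) := fun t => r ↑t -ᵥ r 0 with hv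
    have hker : ∀ t, v t ∈ LinearMap.ker (linmap a) := by
      intro t
      rw [LinearMap.mem_ker]
      have h1 : linmap a (r ↑t) = -b := by
        have := hrzero ↑t
        simp only [linmap, LinearMap.coe_mk, AddHom.coe_mk]
        linarith
      have h2 : linmap a (r 0) = -b := by
        have := hrzero 0
        simp only [linmap, LinearMap.coe_mk, AddHom.coe_mk]
        linarith
      have : v t = r ↑t - r 0 := rfl
      rw [this, map_sub, h1, h2, sub_self]
    have hspan : Submodule.span ℝ (Set.range v) ≤ LinearMap.ker (linmap a) := by
      rw [Submodule.span_le]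
      rintro _ ⟨t, rfl⟩
      exact hker t
    have hne : LinearMap.ker (linmap a) ≠ ⊤ := by
      intro htop
      have hu : Pi.single j0 1 ∈ LinearMap.ker (linmap a) := htop ▸ Submodule.mem_top
      rw [LinearMap.mem_ker] at hu
      simp only [linmap, LinearMap.coe_mk, AddHom.coe_mk] at hu
      rw [Finset.sum_eq_single j0] at hu
      · simp at hu
        exact hj0 hu
      · intro j _ hjne
        simp [Pi.single_apply, hjne]
      · simp
    have hlt : Module.finrank ℝ (LinearMap.ker (linmap a)) < d := by
      have := Submodule.finrank_lt (K := ℝ) hne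
      rwa [Module.finrank_fin_fun] at this
    have hcard : Fintype.card {t : Fin (d+1) // t ≠ 0} = d := by
      simp [Fintype.card_subtype_compl]
    have hfr : Module.finrank ℝ (Submodule.span ℝ (Set.range v)) = d := by
      rw [finrank_span_eq_card hAI, hcard]
    have := Submodule.finrank_mono hspan
    omega
  -- Radon + separation
  obtain ⟨I, z, hzI, hzIc⟩ := Convex.radon_partition (𝕜 := ℝ) hnotAI
  set Af : Finset (Fin (d+1)) := Finset.univ.filter (· ∈ I) with hAf
  set Bf : Finset (Fin (d+1)) := Finset.univ.filter (· ∉ I) with hBf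
  have hdAB : Disjoint Af Bf := by
    rw [Finset.disjoint_left]
    intro t ht ht'
    rw [hAf, Finset.mem_filter] at ht
    rw [hBf, Finset.mem_filter] at ht'
    exact ht'.2 ht.2
  obtain ⟨w, c, hW1, hW2⟩ := hsep Af Bf hdAB
  have hlinW : IsLinearMap ℝ (fun v : Fin d → ℝ => ∑ j, w j * v j) := by
    constructor
    · intro u v'
      simp [mul_add, Finset.sum_add_distrib]
    · intro c' v'
      simp only [Pi.smul_apply, smul_eq_mul, Finset.mul_sum]
      exact Finset.sum_congr rfl fun j _ => by ring
  have hmemr : ∀ t, t ∈ I → (∑ j, w j * r t j) < c := by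
    intro t ht
    have htA : t ∈ Af := by
      rw [hAf, Finset.mem_filter]
      exact ⟨Finset.mem_univ _, ht⟩
    have hq : (∑ j, w j * x (Q t) j) < c :=
      hW1 t htA _ ⟨Q t, Finset.mem_coe.2 (hQmem t), rfl⟩
    have hp : (∑ j, w j * x (P t) j) < c :=
      hW1 t htA _ ⟨P t, Finset.mem_coe.2 (hPmem t), rfl⟩
    exact (convex_halfSpace_lt hlinW c) (a := 1 - lam t) (b := lam t) hq hp
      (by linarith [hlam1 t]) (hlam0 t) (by ring)
  have hmemr' : ∀ t, t ∉ I → c < (∑ j, w j * r t j) := by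
    intro t ht
    have htB : t ∈ Bf := by
      rw [hBf, Finset.mem_filter]
      exact ⟨Finset.mem_univ _, ht⟩
    have hq : c < (∑ j, w j * x (Q t) j) :=
      hW2 t htB _ ⟨Q t, Finset.mem_coe.2 (hQmem t), rfl⟩
    have hp : c < (∑ j, w j * x (P t) j) :=
      hW2 t htB _ ⟨P t, Finset.mem_coe.2 (hPmem t), rfl⟩
    exact (convex_halfSpace_gt hlinW c) (a := 1 - lam t) (b := lam t) hq hp
      (by linarith [hlam1 t]) (hlam0 t) (by ring)
  have hz1 : (∑ j, w j * z j) < c := by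
    have hsub : r '' I ⊆ {v : Fin d → ℝ | (∑ j, w j * v j) < c} := by
      rintro _ ⟨t, ht, rfl⟩
      exact hmemr t ht
    exact convexHull_min hsub (convex_halfSpace_lt hlinW c) hzI
  have hz2 : c < (∑ j, w j * z j) := by
    have hsub : r '' Iᶜ ⊆ {v : Fin d → ℝ | c < (∑ j, w j * v j)} := by
      rintro _ ⟨t, ht, rfl⟩
      exact hmemr' t ht
    exact convexHull_min hsub (convex_halfSpace_gt hlinW c) hzIc
  linarith


/-- Uniqueness of resistant hyperplanes: at most one affine function makes the `k t`-th
smallest residual in every `S t` equal to zero. -/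
theorem stmt6 (d n : ℕ) (x : Fin n → Fin d → ℝ) (S : Fin (d + 1) → Finset (Fin n))
    (hne : ∀ t, (S t).Nonempty)
    (hdisj : ∀ t t', t ≠ t' → Disjoint (S t) (S t'))
    (hsep : WellSeparable (fun t => x '' ↑(S t)))
    (y : Fin n → ℝ) (k : Fin (d + 1) → ℕ)
    (hk : ∀ t, 1 ≤ k t ∧ k t ≤ (S t).card)
    (β1 β2 : (Fin d → ℝ) × ℝ)
    (h1 : ∀ t, kthSmallest (S t) (fun i => y i - affEval β1 (x i)) (k t) = 0)
    (h2 : ∀ t, kthSmallest (S t) (fun i => y i - affEval β2 (x i)) (k t) = 0) :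
    β1 = β2 := by
  classical
  by_contra h12
  have hab : ¬((fun j => β1.1 j - β2.1 j) = (0 : Fin d → ℝ) ∧ β1.2 - β2.2 = 0) := by
    rintro ⟨ha0, hb0⟩
    apply h12
    refine Prod.ext (funext fun j => ?_) (by linarith)
    have := congrFun ha0 j
    simp only [Pi.zero_apply] at this
    linarith
  obtain ⟨t, ht⟩ := exists_onesided x S hsep _ _ hab
  have hdelta : ∀ i, (∑ j, (β1.1 j - β2.1 j) * x i j) + (β1.2 - β2.2)
      = affEval β1 (x i) - affEval β2 (x i) := by
    intro i
    simp only [affEval, sub_mul, Finset.sum_sub_distrib]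
    ring
  rcases ht with h | h
  · have hlt : ∀ i ∈ S t, (y i - affEval β2 (x i)) < (y i - affEval β1 (x i)) := by
      intro i hi
      have hx := h i hi
      rw [hdelta i] at hx
      linarith
    have hkk := kth_lt_kth (hk t).1 (hk t).2 hlt
    rw [h2 t, h1 t] at hkk
    exact lt_irrefl 0 hkk
  · have hlt : ∀ i ∈ S t, (y i - affEval β1 (x i)) < (y i - affEval β2 (x i)) := by
      intro i hi
      have hx := h i hi
      rw [hdelta i] at hx
      linarith
    have hkk := kth_lt_kth (hk t).1 (hk t).2 hlt
    rw [h1 t, h2 t] at hkk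
    exact lt_irrefl 0 hkk
end

section
/- Group strategyproofness of generalized resistant hyperplane mechanisms: Let x₁, …, x_n ∈ ℝᵈ and S₁, …, S_{d+1} ⊆ [n] nonempty pairwise disjoint with {x_i : i ∈ S_t} well separable in ℝᵈ, and k_t ∈ [|S_t|]. Suppose M maps each y ∈ ℝⁿ to the unique affine β with k_t-th smallest residual in each S_t equal to zero. Then for any true values y, any coalition C ⊆ [n], and any misreports ỹ with ỹ_i = y_i for i ∉ C: if M(ỹ) ≠ M(y), then some agent i ∈ C is strictly worse off, i.e., the outcome for i under M(ỹ) is strictly further from y_i on the same side, formally: there exists i ∈ C with either M(ỹ)(x_i) > M(y)(x_i) ≥ y_i or M(ỹ)(x_i) < M(y)(x_i) ≤ y_i. -/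


lemma sorted_countP {l : List ℝ} (hs : l.Pairwise (· ≤ ·)) {k : ℕ} (hk1 : 1 ≤ k)
    (hk2 : k ≤ l.length) (h0 : l.getD (k-1) 0 = 0) :
    l.countP (fun a => decide (a < 0)) ≤ k - 1 ∧ k ≤ l.countP (fun a => decide (a ≤ 0)) := by
  have hkl : k - 1 < l.length := by omega
  rw [List.getD_eq_getElem l 0 hkl] at h0
  constructor
  · have hsplit : l.countP (fun a => decide (a < 0))
        = (l.take (k-1)).countP (fun a => decide (a < 0))
          + (l.drop (k-1)).countP (fun a => decide (a < 0)) := by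
      conv_lhs => rw [← List.take_append_drop (k-1) l]
      rw [List.countP_append]
    rw [hsplit]
    have hdrop : (l.drop (k-1)).countP (fun a => decide (a < 0)) = 0 := by
      rw [List.countP_eq_zero]
      intro a ha
      rw [List.mem_iff_getElem] at ha
      obtain ⟨i, hi, rfl⟩ := ha
      have hi' : k - 1 + i < l.length := by
        have := hi; rw [List.length_drop] at this; omega
      rw [List.getElem_drop]
      simp only [decide_eq_true_eq, not_lt]
      have := hs.rel_get_of_le (a := ⟨k-1, hkl⟩) (b := ⟨k-1+i, hi'⟩) (by simp)
      simp only [List.get_eq_getElem] at this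
      linarith [h0 ▸ this]
    rw [hdrop, Nat.add_zero]
    calc (l.take (k-1)).countP (fun a => decide (a < 0)) ≤ (l.take (k-1)).length :=
          List.countP_le_length
      _ ≤ k - 1 := by simp
  · have hmono : (l.take k).countP (fun a => decide (a ≤ 0)) ≤ l.countP (fun a => decide (a ≤ 0)) := by
      conv_rhs => rw [← List.take_append_drop k l]
      rw [List.countP_append]; omega
    refine le_trans ?_ hmono
    have hall : ∀ a ∈ l.take k, a ≤ 0 := by
      intro a ha
      rw [List.mem_take_iff_getElem] at ha
      obtain ⟨i, hi, rfl⟩ := ha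
      have hik : i < k := lt_of_lt_of_le hi inf_le_left
      have hil : i < l.length := lt_of_lt_of_le hi inf_le_right
      have := hs.rel_get_of_le (a := ⟨i, hil⟩) (b := ⟨k-1, hkl⟩) (by simp; omega)
      simp only [List.get_eq_getElem] at this
      linarith [h0 ▸ this]
    have : (l.take k).countP (fun a => decide (a ≤ 0)) = (l.take k).length := by
      rw [List.countP_eq_length]
      intro a ha; simpa using hall a ha
    rw [this, List.length_take]; omega

lemma kth_bounds {n : ℕ} (s : Finset (Fin n)) (r : Fin n → ℝ) {k : ℕ} (hk1 : 1 ≤ k)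
    (hk2 : k ≤ s.card) (h : kthSmallest s r k = 0) :
    (s.filter fun i => r i < 0).card ≤ k - 1 ∧ k ≤ (s.filter fun i => r i ≤ 0).card := by
  set l := Multiset.sort (s.val.map r) (· ≤ ·) with hl
  have hlen : l.length = s.card := by
    rw [hl, Multiset.length_sort, Multiset.card_map]; rfl
  have hsort : l.Pairwise (· ≤ ·) := Multiset.pairwise_sort _ _
  have hcoe : (↑l : Multiset ℝ) = s.val.map r := Multiset.sort_eq _ _
  have key := sorted_countP hsort hk1 (by omega) h
  have h1 : ∀ (p : ℝ → Prop) [DecidablePred p],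
      l.countP (fun a => decide (p a)) = (s.filter fun i => p (r i)).card := by
    intro p hp
    rw [← Multiset.coe_countP, hcoe, Multiset.countP_map]
    rfl
  rw [h1 (fun a => a < 0), h1 (fun a => a ≤ 0)] at key
  exact key


lemma combo_eval {d : ℕ} (v a b : Fin d → ℝ) (μ : ℝ) :
    (∑ j, v j * ((1-μ)*a j + μ*b j)) = (1-μ)*(∑ j, v j*a j) + μ*(∑ j, v j * b j) := by
  rw [Finset.mul_sum, Finset.mul_sum, ← Finset.sum_add_distrib]
  exact Finset.sum_congr rfl (fun j _ => by ring)

lemma geom {d : ℕ} (w : Fin d → ℝ) (c : ℝ) (X : Fin (d+1) → Set (Fin d → ℝ))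
    (hsep : WellSeparable X)
    (hA : ∀ t, ∃ a ∈ X t, (∑ j, w j * a j) + c ≤ 0)
    (hB : ∀ t, ∃ b ∈ X t, 0 ≤ (∑ j, w j * b j) + c) :
    (∀ j, w j = 0) ∧ c = 0 := by
  classical
  choose a ha hga using hA
  choose b hb hgb using hB
  set ga : Fin (d+1) → ℝ := fun t => (∑ j, w j * a t j) + c with hga_def
  set gb : Fin (d+1) → ℝ := fun t => (∑ j, w j * b t j) + c with hgb_def
  set μ : Fin (d+1) → ℝ := fun t => (-(ga t)) / (gb t - ga t) with hμ_def
  set q : Fin (d+1) → (Fin d → ℝ) := fun t => fun j => (1 - μ t) * a t j + μ t * b t j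
    with hq_def
  have hga' : ∀ t, ga t ≤ 0 := hga
  have hgb' : ∀ t, 0 ≤ gb t := hgb
  have hμ0 : ∀ t, 0 ≤ μ t := by
    intro t
    rcases eq_or_lt_of_le (le_trans (hga' t) (hgb' t)) with h | h
    · have h0 : ga t = 0 := le_antisymm (hga' t) (h ▸ hgb' t)
      simp [hμ_def, h0]
    · exact div_nonneg (by linarith [hga' t]) (by linarith)
  have hμ1 : ∀ t, μ t ≤ 1 := by
    intro t
    rcases eq_or_lt_of_le (le_trans (hga' t) (hgb' t)) with h | h
    · have h0 : ga t = 0 := le_antisymm (hga' t) (h ▸ hgb' t)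
      simp [hμ_def, h0]
    · rw [hμ_def]; simp only []
      rw [div_le_one (by linarith)]; linarith [hgb' t]
  have he : ∀ t, (∑ j, w j * q t j) + c = (1 - μ t) * ga t + μ t * gb t := by
    intro t
    simp only [hq_def]
    rw [combo_eval, hga_def, hgb_def]
    ring
  have hgq : ∀ t, (∑ j, w j * q t j) + c = 0 := by
    intro t
    rw [he t]
    rcases eq_or_lt_of_le (le_trans (hga' t) (hgb' t)) with h | h
    · have h0 : ga t = 0 := le_antisymm (hga' t) (h ▸ hgb' t)
      rw [← h, h0]; ring
    · have hdne : gb t - ga t ≠ 0 := by linarith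
      have hmul : μ t * (gb t - ga t) = -(ga t) := by
        rw [hμ_def]; field_simp
      nlinarith [hmul]
  set v : Fin (d+1) → (Fin d → ℝ) × ℝ := fun t => (q t, 1) with hv_def
  have hw : ∀ j, w j = 0 := by
    by_contra hcon
    push_neg at hcon
    obtain ⟨j₀, hj₀⟩ := hcon
    by_cases hli : LinearIndependent ℝ v
    · have hcard : Fintype.card (Fin (d+1)) = Module.finrank ℝ ((Fin d → ℝ) × ℝ) := by
        simp
      have hspan : Submodule.span ℝ (Set.range v) = ⊤ :=
        hli.span_eq_top_of_card_eq_finrank hcard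
      let φ : ((Fin d → ℝ) × ℝ) →ₗ[ℝ] ℝ :=
        { toFun := fun ps => (∑ j, w j * ps.1 j) + c * ps.2
          map_add' := by
            intro p r
            simp only [Prod.fst_add, Prod.snd_add, Pi.add_apply, mul_add,
              Finset.sum_add_distrib]
            ring
          map_smul' := by
            intro m p
            simp only [Prod.smul_fst, Prod.smul_snd, Pi.smul_apply, smul_eq_mul,
              RingHom.id_apply, mul_add, Finset.mul_sum]
            congr 1
            · exact Finset.sum_congr rfl (fun j _ => by ring)
            · ring }
      have hφ0 : φ = 0 := by
        apply LinearMap.ext_on hspan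
        rintro _ ⟨t, rfl⟩
        have h := hgq t
        simp only [φ, hv_def, LinearMap.coe_mk, AddHom.coe_mk, LinearMap.zero_apply]
        rw [mul_one]
        exact h
      have heval : φ (Pi.single j₀ 1, 0) = w j₀ := by
        simp only [φ, LinearMap.coe_mk, AddHom.coe_mk, mul_zero, add_zero]
        rw [Finset.sum_eq_single j₀]
        · simp
        · intro b _ hbne; simp [Pi.single_apply, hbne]
        · simp
      rw [hφ0] at heval
      simp at heval
      exact hj₀ heval.symm
    · obtain ⟨lam, hsum, jj, hjj⟩ := Fintype.not_linearIndependent_iff.mp hli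
      have hq0 : ∀ j, (∑ t, lam t * q t j) = 0 := by
        intro j
        have h := congrArg (fun z => z.1 j) hsum
        simpa [hv_def, Prod.fst_sum, Finset.sum_apply] using h
      have hl0 : (∑ t, lam t) = 0 := by
        have h := congrArg (fun z => z.2) hsum
        simpa [hv_def, Prod.snd_sum] using h
      obtain ⟨w', c', hIsep, hJsep⟩ := hsep (Finset.univ.filter (fun t => 0 < lam t))
        (Finset.univ.filter (fun t => lam t < 0))
        (by rw [Finset.disjoint_left]; intro t ht ht'; simp at ht ht'; linarith)
      -- evaluate w' on q t via convexity
      have hcombo : ∀ t, (∑ j, w' j * q t j)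
          = (1 - μ t) * (∑ j, w' j * a t j) + μ t * (∑ j, w' j * b t j) := by
        intro t
        simp only [hq_def]
        rw [combo_eval]
      have hqI : ∀ t, 0 < lam t → (∑ j, w' j * q t j) < c' := by
        intro t ht
        have hta := hIsep t (by simp [ht]) (a t) (ha t)
        have htb := hIsep t (by simp [ht]) (b t) (hb t)
        rw [hcombo t]
        rcases eq_or_lt_of_le (hμ1 t) with h | h
        · rw [h]; simpa using htb
        · nlinarith [mul_lt_mul_of_pos_left hta (show (0:ℝ) < 1 - μ t by linarith),
            mul_le_mul_of_nonneg_left (le_of_lt htb) (hμ0 t)]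
      have hqJ : ∀ t, lam t < 0 → c' < (∑ j, w' j * q t j) := by
        intro t ht
        have hta := hJsep t (by simp [ht]) (a t) (ha t)
        have htb := hJsep t (by simp [ht]) (b t) (hb t)
        rw [hcombo t]
        rcases eq_or_lt_of_le (hμ1 t) with h | h
        · rw [h]; simpa using htb
        · nlinarith [mul_lt_mul_of_pos_left hta (show (0:ℝ) < 1 - μ t by linarith),
            mul_le_mul_of_nonneg_left (le_of_lt htb) (hμ0 t)]
      have hterm : ∀ t, lam t * ((∑ j, w' j * q t j) - c') ≤ 0 := by
        intro t
        rcases lt_trichotomy (lam t) 0 with h | h | h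
        · have := hqJ t h
          nlinarith
        · simp [h]
        · have := hqI t h
          nlinarith
      have hstrict : lam jj * ((∑ j, w' j * q jj j) - c') < 0 := by
        rcases lt_trichotomy (lam jj) 0 with h | h | h
        · have := hqJ jj h
          nlinarith
        · exact absurd h hjj
        · have := hqI jj h
          nlinarith
      have hsum0 : (∑ t, lam t * ((∑ j, w' j * q t j) - c')) = 0 := by
        simp only [mul_sub]
        rw [Finset.sum_sub_distrib]
        have h1 : (∑ t, lam t * (∑ j, w' j * q t j)) = 0 := by
          have hx : ∀ t : Fin (d+1), lam t * (∑ j, w' j * q t j)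
              = ∑ j, w' j * (lam t * q t j) := by
            intro t
            rw [Finset.mul_sum]
            exact Finset.sum_congr rfl (fun j _ => by ring)
          rw [Finset.sum_congr rfl (fun t _ => hx t), Finset.sum_comm]
          refine Finset.sum_eq_zero (fun j _ => ?_)
          rw [← Finset.mul_sum, hq0 j, mul_zero]
        have h2 : (∑ t, lam t * c') = 0 := by
          rw [← Finset.sum_mul, hl0, zero_mul]
        rw [h1, h2, sub_zero]
      have hlt := Finset.sum_lt_sum (f := fun t => lam t * ((∑ j, w' j * q t j) - c'))
        (g := fun _ => (0:ℝ)) (s := Finset.univ)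
        (fun t _ => hterm t) ⟨jj, Finset.mem_univ jj, hstrict⟩
      rw [hsum0] at hlt
      simp at hlt
  refine ⟨hw, ?_⟩
  have h := hgq 0
  have hz : (∑ j, w j * q 0 j) = 0 :=
    Finset.sum_eq_zero (fun j _ => by rw [hw j]; ring)
  linarith [h, hz]
/-- Group strategyproofness of generalized resistant hyperplane mechanisms: if a coalition
`C` misreports and changes the output hyperplane, then some member of `C` is strictly
worse off: her outcome moves strictly away from her true value on the same side. -/
theorem stmt7 (d n : ℕ) (x : Fin n → Fin d → ℝ) (S : Fin (d + 1) → Finset (Fin n))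
    (hne : ∀ t, (S t).Nonempty)
    (hdisj : ∀ t t', t ≠ t' → Disjoint (S t) (S t'))
    (hsep : WellSeparable (fun t => x '' ↑(S t)))
    (k : Fin (d + 1) → ℕ) (hk : ∀ t, 1 ≤ k t ∧ k t ≤ (S t).card)
    (M : (Fin n → ℝ) → (Fin d → ℝ) × ℝ)
    (hM : ∀ (z : Fin n → ℝ) (t : Fin (d + 1)),
      kthSmallest (S t) (fun i => z i - affEval (M z) (x i)) (k t) = 0)
    (y yt : Fin n → ℝ) (C : Finset (Fin n))
    (hC : ∀ i ∉ C, yt i = y i)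
    (hchange : M yt ≠ M y) :
    ∃ i ∈ C,
      (affEval (M yt) (x i) > affEval (M y) (x i) ∧ affEval (M y) (x i) ≥ y i) ∨
      (affEval (M yt) (x i) < affEval (M y) (x i) ∧ affEval (M y) (x i) ≤ y i) := by
  classical
  by_contra hcon
  push_neg at hcon
  have hdiff : ∀ p : Fin d → ℝ,
      (∑ j, ((M yt).1 j - (M y).1 j) * p j) + ((M yt).2 - (M y).2)
        = affEval (M yt) p - affEval (M y) p := by
    intro p
    simp only [affEval, sub_mul, Finset.sum_sub_distrib]
    ring
  have hA : ∀ t, ∃ a ∈ (fun t => x '' ↑(S t)) t,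
      (∑ j, ((M yt).1 j - (M y).1 j) * a j) + ((M yt).2 - (M y).2) ≤ 0 := by
    intro t
    by_contra hno
    push_neg at hno
    have hpos : ∀ i ∈ S t, affEval (M y) (x i) < affEval (M yt) (x i) := by
      intro i hi
      have h := hno (x i) ⟨i, by simpa using hi, rfl⟩
      rw [hdiff] at h
      linarith
    have hb1 := kth_bounds (S t) (fun i => y i - affEval (M y) (x i)) (hk t).1 (hk t).2 (hM y t)
    have hb2 := kth_bounds (S t) (fun i => yt i - affEval (M yt) (x i)) (hk t).1 (hk t).2 (hM yt t)
    beta_reduce at hb1 hb2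
    have hsub : ((S t).filter fun i => y i - affEval (M y) (x i) ≤ 0)
        ⊆ ((S t).filter fun i => yt i - affEval (M yt) (x i) < 0) := by
      intro i hi
      rw [Finset.mem_filter] at hi ⊢
      obtain ⟨hiS, hile⟩ := hi
      refine ⟨hiS, ?_⟩
      by_cases hiC : i ∈ C
      · have h1 := (hcon i hiC).1 (hpos i hiS)
        linarith
      · rw [hC i hiC]
        linarith [hpos i hiS]
    have hcard := Finset.card_le_card hsub
    have hk1 := (hk t).1
    omega
  have hB : ∀ t, ∃ b ∈ (fun t => x '' ↑(S t)) t,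
      0 ≤ (∑ j, ((M yt).1 j - (M y).1 j) * b j) + ((M yt).2 - (M y).2) := by
    intro t
    by_contra hno
    push_neg at hno
    have hneg : ∀ i ∈ S t, affEval (M yt) (x i) < affEval (M y) (x i) := by
      intro i hi
      have h := hno (x i) ⟨i, by simpa using hi, rfl⟩
      rw [hdiff] at h
      linarith
    have hb1 := kth_bounds (S t) (fun i => y i - affEval (M y) (x i)) (hk t).1 (hk t).2 (hM y t)
    have hb2 := kth_bounds (S t) (fun i => yt i - affEval (M yt) (x i)) (hk t).1 (hk t).2 (hM yt t)
    beta_reduce at hb1 hb2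
    have hsub : ((S t).filter fun i => ¬ (y i - affEval (M y) (x i) < 0))
        ⊆ ((S t).filter fun i => ¬ (yt i - affEval (M yt) (x i) ≤ 0)) := by
      intro i hi
      rw [Finset.mem_filter] at hi ⊢
      obtain ⟨hiS, hile⟩ := hi
      rw [not_lt] at hile
      rw [not_le]
      refine ⟨hiS, ?_⟩
      by_cases hiC : i ∈ C
      · have h1 := (hcon i hiC).2 (hneg i hiS)
        exfalso
        linarith
      · rw [hC i hiC]
        linarith [hneg i hiS]
    have hcard := Finset.card_le_card hsub
    have he1 := Finset.card_filter_add_card_filter_not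
      (s := S t) (fun i => y i - affEval (M y) (x i) < 0)
    have he2 := Finset.card_filter_add_card_filter_not
      (s := S t) (fun i => yt i - affEval (M yt) (x i) ≤ 0)
    have hk1 := (hk t).1
    have hk2 := (hk t).2
    omega
  have key := geom (fun j => (M yt).1 j - (M y).1 j) ((M yt).2 - (M y).2)
    (fun t => x '' ↑(S t)) hsep hA hB
  apply hchange
  have h1 : (M yt).1 = (M y).1 := funext fun j => by
    have h := key.1 j
    linarith
  have h2 : (M yt).2 = (M y).2 := by have := key.2; linarith
  exact Prod.ext h1 h2
end

section
/- Impartial mechanisms of additive form: Fix x₁, …, x_n ∈ ℝᵈ. Suppose for each i ∈ [n] a function g_i : ℝ → ℝᵈ and a constant c ∈ ℝ are given, and M(y) = (β₁, β₀) with β₁ = Σ_i g_i(y_i) and β₀ = c − Σ_i ⟨g_i(y_i), x_i⟩. Then M is impartial: for every i, the outcome ŷ_i = ⟨β₁, x_i⟩ + β₀ does not depend on y_i. -/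
/-- Mechanisms of the additive form `β₁ = Σᵢ gᵢ(yᵢ)`, `β₀ = c − Σᵢ ⟨gᵢ(yᵢ), xᵢ⟩` are
impartial: the outcome `ŷᵢ = ⟨β₁, xᵢ⟩ + β₀` for agent `i` does not depend on `yᵢ`. -/
theorem stmt11 (d n : ℕ) (x : Fin n → Fin d → ℝ)
    (g : Fin n → ℝ → Fin d → ℝ) (c : ℝ)
    (M : (Fin n → ℝ) → (Fin d → ℝ) × ℝ)
    (hM : ∀ y : Fin n → ℝ,
      M y = (fun j => ∑ i, g i (y i) j, c - ∑ i, ∑ j, g i (y i) j * x i j)) :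
    ∀ (y : Fin n → ℝ) (i : Fin n) (y' : ℝ),
      affEval (M (Function.update y i y')) (x i) = affEval (M y) (x i) := by
  intro y i y'
  have key : ∀ z : Fin n → ℝ,
      affEval (M z) (x i)
        = c + ∑ i', ((∑ j, g i' (z i') j * x i j) - ∑ j, g i' (z i') j * x i' j) := by
    intro z
    simp only [hM, affEval, Finset.sum_sub_distrib, Finset.sum_mul]
    rw [Finset.sum_comm]
    ring
  rw [key, key]
  congr 1
  apply Finset.sum_congr rfl
  intro i' _
  by_cases h : i' = i
  · subst h; simp
  · simp [Function.update_of_ne h]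
end

section
/- Characterization of impartial mechanisms in simple linear regression: Let x₁, …, x_n ∈ ℝ be pairwise distinct with n ≥ 2. Suppose M : ℝⁿ → ℝ² returns a line (β₁(y), β₀(y)) such that for each i, the outcome ŷ_i(y) = β₁(y)·x_i + β₀(y) is independent of y_i. Then there exist functions g₁, …, g_n : ℝ → ℝ and a constant c ∈ ℝ such that β₁(y) = Σ_i g_i(y_i) and β₀(y) = c − Σ_i g_i(y_i)·x_i for all y. -/
open Finset

private lemma const_of_update {n : ℕ} (f : (Fin n → ℝ) → ℝ)
    (h : ∀ (y : Fin n → ℝ) (k : Fin n) (c : ℝ), f (Function.update y k c) = f y) :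
    ∀ y, f y = f 0 := by
  classical
  have key : ∀ s : Finset (Fin n), ∀ y : Fin n → ℝ,
      f y = f (fun j => if j ∈ s then 0 else y j) := by
    intro s
    induction s using Finset.induction_on with
    | empty => intro y; simp
    | insert _ _ hi ih =>
      intro y
      rename_i i s
      have hupd : (fun j => if j ∈ insert i s then (0:ℝ) else y j)
          = Function.update (fun j => if j ∈ s then (0:ℝ) else y j) i 0 := by
        funext j
        by_cases hj : j = i
        · subst hj; simp
        · simp [Function.update_of_ne hj, hj]
      rw [hupd, h, ← ih]
  intro y
  have := key Finset.univ y
  simpa [Pi.zero_def] using this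

/-- Characterization of impartial mechanisms for simple linear regression with distinct
x-coordinates: if the outcome `ŷᵢ = β₁(y)·xᵢ + β₀(y)` never depends on `yᵢ`, then
`β₁(y) = Σᵢ gᵢ(yᵢ)` and `β₀(y) = c − Σᵢ gᵢ(yᵢ)·xᵢ` for some functions `gᵢ` and constant `c`. -/
theorem stmt12 (n : ℕ) (hn : 2 ≤ n) (x : Fin n → ℝ) (hx : Function.Injective x)
    (B1 B0 : (Fin n → ℝ) → ℝ)
    (himp : ∀ (y : Fin n → ℝ) (i : Fin n) (y' : ℝ),
      B1 (Function.update y i y') * x i + B0 (Function.update y i y') =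
        B1 y * x i + B0 y) :
    ∃ (g : Fin n → ℝ → ℝ) (c : ℝ),
      ∀ y : Fin n → ℝ, B1 y = ∑ i, g i (y i) ∧ B0 y = c - ∑ i, g i (y i) * x i := by
  classical
  -- Step 1: the one-coordinate increment of B1 is invariant under changing other coordinates
  have hstep : ∀ (i k : Fin n), k ≠ i → ∀ (a b c : ℝ) (y : Fin n → ℝ),
      B1 (Function.update (Function.update y k c) i a)
        - B1 (Function.update (Function.update y k c) i b)
      = B1 (Function.update y i a) - B1 (Function.update y i b) := by
    intro i k hk a b c y
    have hxk : x k - x i ≠ 0 := sub_ne_zero.mpr (fun h => hk (hx h))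
    have e1 := himp (Function.update y i a) k c
    have e2 := himp (Function.update y i b) k c
    have e3a := himp y i a
    have e3b := himp y i b
    have e4a := himp (Function.update y k c) i a
    have e4b := himp (Function.update y k c) i b
    rw [Function.update_comm hk.symm] at e1 e2
    have key : (B1 (Function.update (Function.update y k c) i a)
        - B1 (Function.update (Function.update y k c) i b)
        - (B1 (Function.update y i a) - B1 (Function.update y i b))) * (x k - x i) = 0 := by
      linear_combination e1 - e2 - e4a + e4b + e3a - e3b
    rcases mul_eq_zero.mp key with h | h
    · linarith
    · exact absurd h hxk
  -- Step 2: the increment only depends on i, a, b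
  have hΦ : ∀ (i : Fin n) (a b : ℝ) (y : Fin n → ℝ),
      B1 (Function.update y i a) - B1 (Function.update y i b)
      = B1 (Function.update 0 i a) - B1 (Function.update 0 i b) := by
    intro i a b y
    refine const_of_update (fun z => B1 (Function.update z i a) - B1 (Function.update z i b)) ?_ y
    intro z k c
    by_cases hk : k = i
    · subst hk; simp [Function.update_idem]
    · exact hstep i k hk a b c z
  set i0 : Fin n := ⟨0, by omega⟩ with hi0
  set g : Fin n → ℝ → ℝ := fun i a =>
    B1 (Function.update 0 i a) - B1 0 + (if i = i0 then B1 0 else 0) with hg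
  -- Step 3: B1 y = ∑ g i (y i)
  have hB1 : ∀ y : Fin n → ℝ, B1 y = ∑ i, g i (y i) := by
    have key : ∀ s : Finset (Fin n), ∀ y : Fin n → ℝ,
        B1 (fun j => if j ∈ s then y j else 0)
        = B1 0 + ∑ i ∈ s, (B1 (Function.update 0 i (y i)) - B1 0) := by
      intro s
      induction s using Finset.induction_on with
      | empty =>
        intro y
        have : (fun j => if j ∈ (∅ : Finset (Fin n)) then y j else 0) = (0 : Fin n → ℝ) := by
          funext j; simp
        rw [this]; simp
      | insert _ _ hi ih =>
        intro y
        rename_i i s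
        set w : Fin n → ℝ := fun j => if j ∈ s then y j else 0 with hw
        have h1 : (fun j => if j ∈ insert i s then y j else 0) = Function.update w i (y i) := by
          funext j
          by_cases hj : j = i
          · subst hj; simp
          · simp [Function.update_of_ne hj, hj, hw]
        have h2 : w = Function.update w i 0 := by
          funext j
          by_cases hj : j = i
          · subst hj; simp [hw, hi]
          · simp [Function.update_of_ne hj]
        have h3 : Function.update (0 : Fin n → ℝ) i 0 = 0 := by
          funext j
          by_cases hj : j = i
          · subst hj; simp
          · simp [Function.update_of_ne hj]
        have h4 := hΦ i (y i) 0 w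
        rw [h3] at h4
        rw [h1, Finset.sum_insert hi]
        have := ih y
        rw [← hw] at this
        rw [← h2] at h4
        linarith
    intro y
    have := key Finset.univ y
    have hy : (fun j => if j ∈ (Finset.univ : Finset (Fin n)) then y j else 0) = y := by
      funext j; simp
    rw [hy] at this
    rw [this, hg]
    rw [Finset.sum_add_distrib, Finset.sum_ite_eq' Finset.univ i0 (fun _ => B1 0)]
    simp
    ring
  -- Step 4: B0
  have hF : ∀ (y : Fin n → ℝ) (k : Fin n) (c : ℝ),
      B0 (Function.update y k c) + ∑ i, g i (Function.update y k c i) * x i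
      = B0 y + ∑ i, g i (y i) * x i := by
    intro y k c
    have e := himp y k c
    have b1 := hB1 y
    have b1' := hB1 (Function.update y k c)
    have hsum1 : ∑ i, g i (Function.update y k c i)
        = g k c + ∑ i ∈ Finset.univ.erase k, g i (y i) := by
      rw [show (fun i => g i (Function.update y k c i))
          = Function.update (fun i => g i (y i)) k (g k c) from ?_]
      · rw [Finset.sum_update_of_mem (Finset.mem_univ k), Finset.sdiff_singleton_eq_erase]
      · funext j
        by_cases hj : j = k
        · subst hj; simp
        · simp [Function.update_of_ne hj]
    have hsum2 : ∑ i, g i (Function.update y k c i) * x i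
        = g k c * x k + ∑ i ∈ Finset.univ.erase k, g i (y i) * x i := by
      rw [show (fun i => g i (Function.update y k c i) * x i)
          = Function.update (fun i => g i (y i) * x i) k (g k c * x k) from ?_]
      · rw [Finset.sum_update_of_mem (Finset.mem_univ k), Finset.sdiff_singleton_eq_erase]
      · funext j
        by_cases hj : j = k
        · subst hj; simp
        · simp [Function.update_of_ne hj]
    have hsplit : ∑ i, g i (y i) = g k (y k) + ∑ i ∈ Finset.univ.erase k, g i (y i) :=
      (Finset.add_sum_erase _ _ (Finset.mem_univ k)).symm
    have hsplit2 : ∑ i, g i (y i) * x i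
        = g k (y k) * x k + ∑ i ∈ Finset.univ.erase k, g i (y i) * x i :=
      (Finset.add_sum_erase _ _ (Finset.mem_univ k)).symm
    rw [hsum1] at b1'
    rw [hsplit] at b1
    rw [hsum2, hsplit2]
    linear_combination e + (b1 - b1') * x k
  obtain ⟨c, hc⟩ : ∃ c, ∀ y : Fin n → ℝ, B0 y + ∑ i, g i (y i) * x i = c := by
    refine ⟨B0 0 + ∑ i, g i ((0:Fin n → ℝ) i) * x i, ?_⟩
    intro y
    exact const_of_update (fun z => B0 z + ∑ i, g i (z i) * x i) hF y
  exact ⟨g, c, fun y => ⟨hB1 y, by have := hc y; linarith⟩⟩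
end

section
/- An impartial mechanism for simple linear regression with admissible points is group strategyproof if and only if it is a constant function of the reports. -/
/-- Outcome `a` is weakly preferred to outcome `b` under every single-peaked preference
with peak `p`: `a` lies weakly between `p` and `b`. -/
def WeaklyPrefers (p a b : ℝ) : Prop := (p ≤ a ∧ a ≤ b) ∨ (b ≤ a ∧ a ≤ p)

/-- Outcome `a` is strictly preferred to outcome `b` under every single-peaked preference
with peak `p`: `p ≤ a < b` or `b < a ≤ p`. -/
def StrictlyPrefers (p a b : ℝ) : Prop := (p ≤ a ∧ a < b) ∨ (b < a ∧ a ≤ p)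

/-- The outcome for agent `i` when the mechanism returns the line `(β₁, β₀)`. -/
def lineOut {n : ℕ} (x : Fin n → ℝ) (M : (Fin n → ℝ) → ℝ × ℝ)
    (y : Fin n → ℝ) (i : Fin n) : ℝ :=
  (M y).1 * x i + (M y).2

/-- An impartial mechanism for simple linear regression with admissible (distinct)
x-coordinates is group strategyproof if and only if it is a constant function. -/
theorem stmt13 (n : ℕ) (hn : 2 ≤ n) (x : Fin n → ℝ) (hx : Function.Injective x)
    (M : (Fin n → ℝ) → ℝ × ℝ)
    (himp : ∀ (y : Fin n → ℝ) (i : Fin n) (y' : ℝ),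
      lineOut x M (Function.update y i y') i = lineOut x M y i) :
    ((∀ (y yt : Fin n → ℝ) (S : Finset (Fin n)), (∀ i ∉ S, yt i = y i) →
        ¬ ((∀ i ∈ S, WeaklyPrefers (y i) (lineOut x M yt i) (lineOut x M y i)) ∧
            ∃ i ∈ S, StrictlyPrefers (y i) (lineOut x M yt i) (lineOut x M y i)))
      ↔ ∃ b : ℝ × ℝ, ∀ y : Fin n → ℝ, M y = b) := by
  constructor
  · intro hgsp
    -- Step 1: no single agent's report affects anyone's outcome
    have key : ∀ (y : Fin n → ℝ) (i j : Fin n) (v : ℝ),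
        lineOut x M (Function.update y i v) j = lineOut x M y j := by
      intro y i j v
      by_cases hij : i = j
      · subst hij; exact himp y i v
      by_contra hne
      set A := lineOut x M y j with hA
      set B := lineOut x M (Function.update y i v) j with hB
      set z := Function.update y j B with hzdef
      have hzj : lineOut x M z j = A := himp y j B
      have hztj : lineOut x M (Function.update z i v) j = B := by
        have hcomm : Function.update z i v
            = Function.update (Function.update y i v) j B := by
          rw [hzdef, Function.update_comm hij]
        rw [hcomm]
        exact himp (Function.update y i v) j B
      have hzi : lineOut x M (Function.update z i v) i = lineOut x M z i :=
        himp z i v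
      apply hgsp z (Function.update z i v) {i, j}
      · intro k hk
        simp only [Finset.mem_insert, Finset.mem_singleton, not_or] at hk
        exact Function.update_of_ne hk.1 v z
      constructor
      · intro k hk
        simp only [Finset.mem_insert, Finset.mem_singleton] at hk
        rcases hk with rfl | rfl
        · rw [hzi]
          rcases le_total (z k) (lineOut x M z k) with h | h
          · exact Or.inl ⟨h, le_refl _⟩
          · exact Or.inr ⟨le_refl _, h⟩
        · rw [hztj, hzj]
          have hzk : z k = B := by rw [hzdef]; simp
          rw [hzk]
          rcases lt_or_gt_of_ne hne with h | h
          · exact Or.inl ⟨le_refl _, le_of_lt h⟩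
          · exact Or.inr ⟨le_of_lt h, le_refl _⟩
      · refine ⟨j, by simp, ?_⟩
        rw [hztj, hzj]
        have hzk : z j = B := by rw [hzdef]; simp
        rw [hzk]
        rcases lt_or_gt_of_ne hne with h | h
        · exact Or.inl ⟨le_refl _, h⟩
        · exact Or.inr ⟨h, le_refl _⟩
    -- Step 2: outcomes are constant in the report profile
    have agree : ∀ (s : Finset (Fin n)) (y z : Fin n → ℝ),
        (∀ k, k ∉ s → y k = z k) → ∀ j, lineOut x M y j = lineOut x M z j := by
      intro s
      induction s using Finset.induction_on with
      | empty =>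
        intro y z h j
        have : y = z := funext fun k => h k (by simp)
        rw [this]
      | @insert a s ha ih =>
        intro y z h j
        have h1 : lineOut x M (Function.update y a (z a)) j = lineOut x M y j :=
          key y a j (z a)
        rw [← h1]
        apply ih
        intro k hk
        by_cases hka : k = a
        · subst hka; simp
        · rw [Function.update_of_ne hka]
          exact h k (by simp [hk, hka])
    have const : ∀ (y : Fin n → ℝ) (j : Fin n),
        lineOut x M y j = lineOut x M (fun _ => 0) j := by
      intro y j
      exact agree Finset.univ y (fun _ => 0) (fun k hk => absurd (Finset.mem_univ k) hk) j
    -- Step 3: the mechanism itself is constant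
    refine ⟨M (fun _ => 0), fun y => ?_⟩
    have h0 : (0 : ℕ) < n := by omega
    have h1 : (1 : ℕ) < n := by omega
    set i0 : Fin n := ⟨0, h0⟩
    set i1 : Fin n := ⟨1, h1⟩
    have hx01 : x i0 ≠ x i1 := fun h => by
      have := hx h
      simp [i0, i1, Fin.ext_iff] at this
    have e0 := const y i0
    have e1 := const y i1
    simp only [lineOut] at e0 e1
    have hs : ((M y).1 - (M (fun _ => 0)).1) * (x i0 - x i1) = 0 := by
      linear_combination e0 - e1
    have hb1 : (M y).1 = (M (fun _ => 0)).1 := by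
      rcases mul_eq_zero.mp hs with h | h
      · linarith
      · exact absurd (sub_eq_zero.mp h) hx01
    have hb0 : (M y).2 = (M (fun _ => 0)).2 := by
      rw [hb1] at e0; linarith
    exact Prod.ext hb1 hb0
  · rintro ⟨b, hb⟩ y yt S hS ⟨hw, k, hk, hs⟩
    have : lineOut x M yt k = lineOut x M y k := by
      simp [lineOut, hb]
    rw [this] at hs
    rcases hs with ⟨_, h⟩ | ⟨h, _⟩ <;> exact lt_irrefl _ h
end

section
/- Lower bound on efficiency: For the specific configuration x_i = i for i ∈ [n] (n ≥ 3) and x_{n+1} = X where X solves (n³−n)/(2(1+3n+2n²+6X²−6Xn−6X)) = 1, any strategyproof mechanism M for simple linear regression fails to be (2−ε)-efficient for every ε > 0. That is, there exists an input y such that RSS(M(y)) ≥ 2 · inf_β RSS(β) (with strict failure of any ratio below 2). -/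
lemma sumA' (n : ℕ) : ∑ i ∈ Finset.range n, ((i:ℝ)+1) = (n:ℝ)*(n+1)/2 := by
  induction n with
  | zero => simp
  | succ k ih => rw [Finset.sum_range_succ, ih]; push_cast; ring

lemma sumB' (n : ℕ) : ∑ i ∈ Finset.range n, ((i:ℝ)+1)^2 = (n:ℝ)*(n+1)*(2*n+1)/6 := by
  induction n with
  | zero => simp
  | succ k ih => rw [Finset.sum_range_succ, ih]; push_cast; ring

lemma sumA (n : ℕ) : ∑ i : Fin n, ((i:ℝ)+1) = (n:ℝ)*(n+1)/2 := by
  rw [Fin.sum_univ_eq_sum_range (fun i => ((i:ℝ)+1))]; exact sumA' n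

lemma sumB (n : ℕ) : ∑ i : Fin n, ((i:ℝ)+1)^2 = (n:ℝ)*(n+1)*(2*n+1)/6 := by
  rw [Fin.sum_univ_eq_sum_range (fun i => ((i:ℝ)+1)^2)]; exact sumB' n

lemma keyid (m X u v : ℝ)
    (hX : m^3 - m = 2*(1+3*m+2*m^2+6*X^2-6*X*m-6*X)) :
    (m-1)*(u^2*(m*(m+1)*(2*m+1)/6) + 2*u*v*(m*(m+1)/2) + m*v^2)
      = ((m-1)*v + (m*(m+1)/2 - X)*u)^2 + (m-1)*(u*X+v)^2 := by
  linear_combination (m*u^2/12) * hX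

lemma dne (m X : ℝ) (hm : 3 ≤ m)
    (hX : m^3 - m = 2*(1+3*m+2*m^2+6*X^2-6*X*m-6*X))
    (h : m*X - m*(m+1)/2 = 0) : False := by
  have hm0 : m ≠ 0 := by linarith
  have hXv : X = (m+1)/2 := by
    have h2 : m * (X - (m+1)/2) = 0 := by linarith [h]
    rcases mul_eq_zero.1 h2 with h'|h'
    · exact absurd h' hm0
    · linarith
  rw [hXv] at hX
  nlinarith


/-- Lower bound on efficiency: for the configuration `x i = i` for `i ∈ [n]` (`n ≥ 3`)
and `x (n+1) = X` with `X` solving `(n³−n)/(2(1+3n+2n²+6X²−6Xn−6X)) = 1`, every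
strategyproof mechanism for simple linear regression admits an input on which its
residual sum of squares is at least twice the optimum. -/
theorem stmt16 (n : ℕ) (hn : 3 ≤ n) (X : ℝ)
    (hX : (n : ℝ) ^ 3 - n =
      2 * (1 + 3 * n + 2 * (n : ℝ) ^ 2 + 6 * X ^ 2 - 6 * X * n - 6 * X))
    (x : Fin (n + 1) → ℝ)
    (hx : ∀ i : Fin (n + 1), x i = if (i : ℕ) < n then ((i : ℕ) + 1 : ℝ) else X)
    (M : (Fin (n + 1) → ℝ) → ℝ × ℝ)
    (hSP : ∀ (y : Fin (n + 1) → ℝ) (i : Fin (n + 1)) (y' : ℝ),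
      WeaklyPrefers (y i) ((M y).1 * x i + (M y).2)
        ((M (Function.update y i y')).1 * x i + (M (Function.update y i y')).2)) :
    ∃ y : Fin (n + 1) → ℝ,
      (∑ i, (y i - ((M y).1 * x i + (M y).2)) ^ 2) ≥
        2 * ⨅ β : ℝ × ℝ, ∑ i, (y i - (β.1 * x i + β.2)) ^ 2 := by
  obtain ⟨m, hm⟩ : ∃ m : ℝ, m = (n : ℝ) := ⟨_, rfl⟩
  have hm3 : (3:ℝ) ≤ m := by rw [hm]; exact_mod_cast hn
  have hX' : m^3 - m = 2*(1+3*m+2*m^2+6*X^2-6*X*m-6*X) := by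
    rw [hm]; linarith [hX]
  obtain ⟨yf, hyfdef⟩ : ∃ yf : ℝ → (Fin (n + 1) → ℝ),
      ∀ Y i, yf Y i = if (i : ℕ) < n then 0 else Y := ⟨_, fun _ _ => rfl⟩
  have hxlast : x (Fin.last n) = X := by rw [hx]; simp
  have hyflast : ∀ Y, yf Y (Fin.last n) = Y := by intro Y; rw [hyfdef]; simp
  have hupd : ∀ Y Y', Function.update (yf Y) (Fin.last n) Y' = yf Y' := by
    intro Y Y'
    funext i
    rcases eq_or_ne i (Fin.last n) with h | h
    · subst h; rw [Function.update_self, hyflast]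
    · have hi : (i : ℕ) < n := Fin.val_lt_last h
      rw [Function.update_of_ne h, hyfdef, hyfdef]
      simp [hi]
  obtain ⟨a, ha⟩ : ∃ a : ℝ → ℝ, ∀ Y, a Y = (M (yf Y)).1 * X + (M (yf Y)).2 :=
    ⟨_, fun _ => rfl⟩
  have hSPa : ∀ Y Y', WeaklyPrefers Y (a Y) (a Y') := by
    intro Y Y'
    have h := hSP (yf Y) (Fin.last n) Y'
    rw [hupd, hxlast, hyflast, ← ha Y, ← ha Y'] at h
    exact h
  -- choose a profitable Y
  obtain ⟨Y, hYpos, hprod⟩ : ∃ Y : ℝ, 0 < Y ∧ 0 ≤ a Y * (a Y - Y) := by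
    rcases le_or_gt (a 1) 0 with h1 | h1
    · exact ⟨1, one_pos, by nlinarith⟩
    · rcases le_or_gt 1 (a 1) with h2 | h2
      · exact ⟨1, one_pos, by nlinarith⟩
      · refine ⟨a 1 / 2, by linarith, ?_⟩
        rcases hSPa (a 1 / 2) 1 with ⟨hl, _⟩ | ⟨hr1, hr2⟩
        · nlinarith
        · linarith
  -- RSS decomposition
  have hRSS : ∀ (Y u v : ℝ), (∑ i, (yf Y i - (u * x i + v)) ^ 2)
      = (u^2*(m*(m+1)*(2*m+1)/6) + 2*u*v*(m*(m+1)/2) + m*v^2) + (Y - (u*X+v))^2 := by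
    intro Y u v
    rw [Fin.sum_univ_castSucc]
    have hstep : ∀ i : Fin n, (yf Y i.castSucc - (u * x i.castSucc + v)) ^ 2
        = (u * ((i:ℝ)+1) + v)^2 := by
      intro i
      have hi : (i : ℕ) < n := i.isLt
      rw [hyfdef, hx]
      simp only [Fin.coe_castSucc]
      rw [if_pos hi, if_pos hi]
      ring
    rw [Finset.sum_congr rfl (fun i _ => hstep i), hxlast, hyflast]
    have e1 : (∑ i : Fin n, (u * ((i:ℝ)+1) + v)^2)
        = u^2 * (∑ i : Fin n, ((i:ℝ)+1)^2) + 2*u*v * (∑ i : Fin n, ((i:ℝ)+1)) + n * v^2 := by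
      rw [Finset.mul_sum, Finset.mul_sum, ← Finset.sum_add_distrib]
      rw [show ((n:ℝ) * v^2) = ∑ _i : Fin n, v^2 by simp [Finset.sum_const, Finset.card_univ]]
      rw [← Finset.sum_add_distrib]
      exact Finset.sum_congr rfl (fun i _ => by ring)
    rw [e1, sumA, sumB, hm]
  refine ⟨yf Y, ?_⟩
  -- lower bound on mechanism RSS
  have hAkey := keyid m X (M (yf Y)).1 (M (yf Y)).2 hX'
  rw [ha Y] at hprod
  have hS : (M (yf Y)).1^2*(m*(m+1)*(2*m+1)/6) + 2*(M (yf Y)).1*(M (yf Y)).2*(m*(m+1)/2)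
      + m*(M (yf Y)).2^2 ≥ ((M (yf Y)).1 * X + (M (yf Y)).2)^2 := by
    nlinarith [hAkey, sq_nonneg ((m-1)*(M (yf Y)).2 + (m*(m+1)/2 - X)*(M (yf Y)).1), hm3]
  have hMlb : (∑ i, (yf Y i - ((M (yf Y)).1 * x i + (M (yf Y)).2)) ^ 2) ≥ Y^2 := by
    rw [hRSS Y (M (yf Y)).1 (M (yf Y)).2]
    nlinarith [hS, hprod]
  -- upper bound on the infimum via the optimal line
  have hd : m*X - m*(m+1)/2 ≠ 0 := fun h => dne m X hm3 hX' h
  obtain ⟨u₀, v₀, h1, h2⟩ : ∃ u v : ℝ, u * X + v = Y/2 ∧ (m-1)*v + (m*(m+1)/2 - X)*u = 0 := by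
    refine ⟨(m-1)*(Y/2) / (m*X - m*(m+1)/2),
      Y/2 - ((m-1)*(Y/2) / (m*X - m*(m+1)/2)) * X, by ring, ?_⟩
    have hu := div_mul_cancel₀ ((m-1)*(Y/2)) hd
    linear_combination -hu
  have hBkey := keyid m X u₀ v₀ hX'
  rw [h2, h1] at hBkey
  have hm1 : (0:ℝ) < m - 1 := by linarith
  have hSval : u₀^2*(m*(m+1)*(2*m+1)/6) + 2*u₀*v₀*(m*(m+1)/2) + m*v₀^2 = (Y/2)^2 := by
    apply mul_left_cancel₀ (ne_of_gt hm1)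
    linarith [hBkey]
  have hFval : (∑ i, (yf Y i - (u₀ * x i + v₀)) ^ 2) = Y^2/2 := by
    rw [hRSS Y u₀ v₀, h1, hSval]; ring
  have hbdd : BddBelow (Set.range (fun β : ℝ × ℝ => ∑ i, (yf Y i - (β.1 * x i + β.2)) ^ 2)) := by
    refine ⟨0, ?_⟩
    rintro _ ⟨β, rfl⟩
    exact Finset.sum_nonneg (fun i _ => sq_nonneg _)
  have hinf : (⨅ β : ℝ × ℝ, ∑ i, (yf Y i - (β.1 * x i + β.2)) ^ 2) ≤ Y^2/2 :=
    le_trans (ciInf_le hbdd (u₀, v₀)) (le_of_eq hFval)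
  linarith [hMlb, hinf]
end

section
/- With y_i = 0 for i ∈ [n] at x_i = i and the constraint that the line passes through (X, Y) (i.e., β₁X + β₀ = Y), the minimum of Σ_{i=1}^{n} (β₁ i + β₀)² over lines satisfying the constraint equals Y² · (n³ − n) / (2(1 + 3n + 2n² + 6X² − 6Xn − 6X)). -/
lemma sum_sq_lin (c d : ℝ) (n : ℕ) :
    ∑ i ∈ Finset.range n, (c * ((i : ℝ) + 1) + d) ^ 2
      = c ^ 2 * ((n : ℝ) * (n + 1) * (2 * n + 1) / 6)
        + 2 * c * d * ((n : ℝ) * (n + 1) / 2) + (n : ℝ) * d ^ 2 := by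
  induction n with
  | zero => simp
  | succ k ih =>
    rw [Finset.sum_range_succ, ih]
    push_cast
    ring

/-- Constrained least squares: with `n` points `(i, 0)`, `i = 1, …, n`, the minimum of the
residual sum of squares over lines passing through `(X, Y)` (substituting
`β₀ = Y − β₁X`) equals `Y² (n³ − n) / (2(1 + 3n + 2n² + 6X² − 6Xn − 6X))`. -/
theorem stmt18 (n : ℕ) (hn : 3 ≤ n) (X Y : ℝ) :
    IsLeast
      {v : ℝ | ∃ b1 : ℝ,
        v = ∑ i ∈ Finset.range n, (b1 * ((i : ℝ) + 1) + (Y - b1 * X)) ^ 2}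
      (Y ^ 2 * ((n : ℝ) ^ 3 - n) /
        (2 * (1 + 3 * n + 2 * (n : ℝ) ^ 2 + 6 * X ^ 2 - 6 * X * n - 6 * X))) := by
  set N : ℝ := (n : ℝ) with hN
  have hN3 : (3 : ℝ) ≤ N := by rw [hN]; exact_mod_cast hn
  have hNpos : 0 < N := by linarith
  set D : ℝ := 1 + 3 * N + 2 * N ^ 2 + 6 * X ^ 2 - 6 * X * N - 6 * X with hD
  have hDpos : 0 < D := by nlinarith [sq_nonneg (2 * X - N - 1)]
  set S1 : ℝ := N * (N + 1) / 2 - N * X with hS1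
  constructor
  · refine ⟨-(6 * Y * S1) / (N * D), ?_⟩
    rw [sum_sq_lin, ← hN]
    have hD0 : D ≠ 0 := hDpos.ne'
    have hN0 : N ≠ 0 := hNpos.ne'
    rw [hS1]
    field_simp
    rw [hD]
    ring
  · rintro v ⟨b1, rfl⟩
    rw [sum_sq_lin]
    rw [div_le_iff₀ (by linarith : (0:ℝ) < 2 * D)]
    have key : (b1 ^ 2 * (N * (N + 1) * (2 * N + 1) / 6)
        + 2 * b1 * (Y - b1 * X) * (N * (N + 1) / 2) + N * (Y - b1 * X) ^ 2) * (2 * D) * N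
        = 12 * ((N * D / 6) * b1 + Y * S1) ^ 2 + Y ^ 2 * N ^ 2 * (N ^ 2 - 1) := by
      rw [hS1, hD]; ring
    nlinarith [sq_nonneg ((N * D / 6) * b1 + Y * S1), key, hNpos]
end

section
/- In two dimensions (d = 1), two finite sets S, S' ⊂ ℝ² that are separable by a vertical line (max x-coordinate of one is strictly less than min x-coordinate of the other) have x-coordinate projections that are well separable in ℝ¹; consequently, for any k ∈ [|S|], k' ∈ [|S'|] and any assignment of y-values, there is a unique line making the k-th smallest residual in S and the k'-th smallest residual in S' both zero. -/
lemma countP_kth_le {n : ℕ} (s : Finset (Fin n)) (r : Fin n → ℝ) (k : ℕ)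
    (hk1 : 1 ≤ k) (hk2 : k ≤ s.card) :
    k ≤ Multiset.countP (· ≤ kthSmallest s r k) (s.val.map r) := by
  classical
  set l := Multiset.sort (s.val.map r) (· ≤ ·) with hl
  have hlen : l.length = s.card := by
    rw [hl, Multiset.length_sort, Multiset.card_map]; rfl
  have hklen : k - 1 < l.length := by omega
  have hsorted : List.Pairwise (· ≤ ·) l := Multiset.pairwise_sort _ _
  have hkth : kthSmallest s r k = l.get ⟨k - 1, hklen⟩ := by
    rw [kthSmallest, ← hl, List.getD_eq_getElem?_getD, List.getElem?_eq_getElem hklen]; rfl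
  have hcoe : (l : Multiset ℝ) = s.val.map r := Multiset.sort_eq _ _
  rw [← hcoe, Multiset.coe_countP]
  have htk : (List.take k l).length = k := by
    rw [List.length_take]; omega
  have h1 : List.countP (fun b => decide (b ≤ kthSmallest s r k)) (List.take k l) = k := by
    have hall : ∀ a ∈ List.take k l, decide (a ≤ kthSmallest s r k) = true := by
      intro a ha
      rw [List.mem_iff_getElem] at ha
      obtain ⟨i, hi, rfl⟩ := ha
      have hik : i < k := by omega
      rw [List.getElem_take]
      simp only [decide_eq_true_eq, hkth]
      exact hsorted.rel_get_of_le (by simp [Fin.le_def]; omega)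
    rw [List.countP_eq_length.mpr hall, htk]
  calc k = List.countP (fun b => decide (b ≤ kthSmallest s r k)) (List.take k l) := h1.symm
    _ ≤ List.countP (fun b => decide (b ≤ kthSmallest s r k)) l := by
        conv_rhs => rw [← List.take_append_drop k l]
        rw [List.countP_append]; omega

lemma kth_le_of_countP {n : ℕ} (s : Finset (Fin n)) (r : Fin n → ℝ) (k : ℕ)
    (hk1 : 1 ≤ k) (hk2 : k ≤ s.card) (v : ℝ)
    (h : k ≤ Multiset.countP (· ≤ v) (s.val.map r)) :
    kthSmallest s r k ≤ v := by
  classical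
  by_contra hv
  push_neg at hv
  set l := Multiset.sort (s.val.map r) (· ≤ ·) with hl
  have hlen : l.length = s.card := by
    rw [hl, Multiset.length_sort, Multiset.card_map]; rfl
  have hklen : k - 1 < l.length := by omega
  have hsorted : List.Pairwise (· ≤ ·) l := Multiset.pairwise_sort _ _
  have hkth : kthSmallest s r k = l.get ⟨k - 1, hklen⟩ := by
    rw [kthSmallest, ← hl, List.getD_eq_getElem?_getD, List.getElem?_eq_getElem hklen]; rfl
  have hcoe : (l : Multiset ℝ) = s.val.map r := Multiset.sort_eq _ _
  rw [← hcoe, Multiset.coe_countP] at h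
  have hdrop : List.countP (fun b => decide (b ≤ v)) (List.drop (k-1) l) = 0 := by
    rw [List.countP_eq_zero]
    intro a ha
    rw [List.mem_iff_getElem] at ha
    obtain ⟨i, hi, rfl⟩ := ha
    have hi' : k - 1 + i < l.length := by rw [List.length_drop] at hi; omega
    rw [List.getElem_drop]
    simp only [decide_eq_true_eq, not_le]
    have : l.get ⟨k-1, hklen⟩ ≤ l[k - 1 + i] := by
      have := hsorted.rel_get_of_le (a := ⟨k-1, hklen⟩)
        (b := ⟨k-1+i, by rw [List.length_drop] at hi; omega⟩) (by simp [Fin.le_def])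
      simpa using this
    have hv' : v < l.get ⟨k-1, hklen⟩ := by rw [← hkth]; exact hv
    linarith
  have htake : List.countP (fun b => decide (b ≤ v)) (List.take (k-1) l) ≤ k - 1 := by
    calc List.countP (fun b => decide (b ≤ v)) (List.take (k-1) l)
        ≤ (List.take (k-1) l).length := List.countP_le_length
      _ ≤ k - 1 := by rw [List.length_take]; omega
  have : List.countP (fun b => decide (b ≤ v)) l ≤ k - 1 := by
    conv_lhs => rw [← List.take_append_drop (k-1) l]
    rw [List.countP_append]; omega
  omega

lemma countP_le_map {n : ℕ} (s : Finset (Fin n)) (r r' : Fin n → ℝ) (v : ℝ)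
    (h : ∀ i ∈ s, r i ≤ r' i) :
    Multiset.countP (· ≤ v) (s.val.map r') ≤ Multiset.countP (· ≤ v) (s.val.map r) := by
  classical
  rw [Multiset.countP_map, Multiset.countP_map]
  rw [← Finset.filter_val, ← Finset.filter_val, ← Finset.card_def, ← Finset.card_def]
  apply Finset.card_le_card
  intro a
  simp only [Finset.mem_filter]
  rintro ⟨has, hle⟩
  exact ⟨has, le_trans (h a has) hle⟩

lemma kth_mono {n : ℕ} (s : Finset (Fin n)) (r r' : Fin n → ℝ) (k : ℕ)
    (hk1 : 1 ≤ k) (hk2 : k ≤ s.card) (h : ∀ i ∈ s, r i ≤ r' i) :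
    kthSmallest s r k ≤ kthSmallest s r' k := by
  classical
  apply kth_le_of_countP s r k hk1 hk2
  calc k ≤ Multiset.countP (· ≤ kthSmallest s r' k) (s.val.map r') :=
        countP_kth_le s r' k hk1 hk2
    _ ≤ Multiset.countP (· ≤ kthSmallest s r' k) (s.val.map r) :=
        countP_le_map s r r' _ h

lemma countP_shift {n : ℕ} (s : Finset (Fin n)) (r : Fin n → ℝ) (v c : ℝ) :
    Multiset.countP (· ≤ v + c) (s.val.map (fun i => r i + c)) =
    Multiset.countP (· ≤ v) (s.val.map r) := by
  classical
  rw [Multiset.countP_map, Multiset.countP_map]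
  congr 1
  apply Multiset.filter_congr
  intro i _
  constructor <;> intro <;> linarith

lemma kth_add_const {n : ℕ} (s : Finset (Fin n)) (r : Fin n → ℝ) (c : ℝ) (k : ℕ)
    (hk1 : 1 ≤ k) (hk2 : k ≤ s.card) :
    kthSmallest s (fun i => r i + c) k = kthSmallest s r k + c := by
  classical
  apply le_antisymm
  · apply kth_le_of_countP s _ k hk1 hk2
    rw [countP_shift]
    exact countP_kth_le s r k hk1 hk2
  · have : kthSmallest s r k ≤ kthSmallest s (fun i => r i + c) k - c := by
      apply kth_le_of_countP s r k hk1 hk2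
      have := countP_shift s r (kthSmallest s (fun i => r i + c) k - c) c
      rw [sub_add_cancel] at this
      rw [← this]
      exact countP_kth_le s (fun i => r i + c) k hk1 hk2
    linarith

lemma kth_shift_bounds {n : ℕ} (S : Finset (Fin n)) (hS : S.Nonempty) (x y : Fin n → ℝ)
    (k : ℕ) (hk1 : 1 ≤ k) (hk2 : k ≤ S.card) (s t : ℝ) (hst : s ≤ t) :
    kthSmallest S (fun i => y i - s * x i) k + (s - t) * (S.sup' hS x) ≤
      kthSmallest S (fun i => y i - t * x i) k ∧
    kthSmallest S (fun i => y i - t * x i) k ≤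
      kthSmallest S (fun i => y i - s * x i) k + (s - t) * (S.inf' hS x) := by
  constructor
  · have h1 : kthSmallest S (fun i => (y i - s * x i) + (s - t) * (S.sup' hS x)) k
        ≤ kthSmallest S (fun i => y i - t * x i) k := by
      apply kth_mono _ _ _ k hk1 hk2
      intro i hi
      have hx : x i ≤ S.sup' hS x := Finset.le_sup' x hi
      nlinarith [mul_nonneg (sub_nonneg.mpr hst) (sub_nonneg.mpr hx)]
    rwa [kth_add_const S _ _ k hk1 hk2] at h1
  · have h1 : kthSmallest S (fun i => y i - t * x i) k
        ≤ kthSmallest S (fun i => (y i - s * x i) + (s - t) * (S.inf' hS x)) k := by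
      apply kth_mono _ _ _ k hk1 hk2
      intro i hi
      have hx : S.inf' hS x ≤ x i := Finset.inf'_le x hi
      nlinarith [mul_nonneg (sub_nonneg.mpr hst) (sub_nonneg.mpr hx)]
    rwa [kth_add_const S _ _ k hk1 hk2] at h1

lemma kth_line_continuous {n : ℕ} (S : Finset (Fin n)) (hS : S.Nonempty) (x y : Fin n → ℝ)
    (k : ℕ) (hk1 : 1 ≤ k) (hk2 : k ≤ S.card) :
    Continuous (fun t => kthSmallest S (fun i => y i - t * x i) k) := by
  set F : ℝ → ℝ := fun t => kthSmallest S (fun i => y i - t * x i) k with hF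
  set M := S.sup' hS x
  set m := S.inf' hS x
  have key : ∀ a b : ℝ, a ≤ b → |F b - F a| ≤ (|M| + |m|) * (b - a) := by
    intro a b hab
    obtain ⟨h1, h2⟩ := kth_shift_bounds S hS x y k hk1 hk2 a b hab
    have h1' : F a + (a - b) * M ≤ F b := h1
    have h2' : F b ≤ F a + (a - b) * m := h2
    rw [abs_le]
    constructor
    · nlinarith [h1', mul_nonneg (sub_nonneg.mpr hab) (abs_nonneg m),
        mul_le_mul_of_nonneg_left (le_abs_self M) (sub_nonneg.mpr hab)]
    · nlinarith [h2', mul_nonneg (sub_nonneg.mpr hab) (abs_nonneg M),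
        mul_le_mul_of_nonneg_left (neg_le_abs m) (sub_nonneg.mpr hab)]
  have hK : (0:ℝ) ≤ |M| + |m| := by positivity
  apply LipschitzWith.continuous (K := ⟨|M| + |m|, hK⟩) (f := F)
  apply LipschitzWith.of_dist_le_mul
  intro a b
  rcases le_total a b with h | h
  · rw [Real.dist_eq, Real.dist_eq, abs_sub_comm, abs_sub_comm a b,
      abs_of_nonneg (sub_nonneg.mpr h)]
    exact key a b h
  · rw [Real.dist_eq, Real.dist_eq, abs_of_nonneg (sub_nonneg.mpr h)]
    exact key b a h

lemma master {n : ℕ} (x y : Fin n → ℝ) (S S' : Finset (Fin n))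
    (hS : S.Nonempty) (hS' : S'.Nonempty)
    (hsep : ∀ i ∈ S, ∀ j ∈ S', x i < x j)
    (k k' : ℕ) (hk1 : 1 ≤ k) (hk2 : k ≤ S.card) (hk1' : 1 ≤ k') (hk2' : k' ≤ S'.card) :
    ∃! β : ℝ × ℝ,
      kthSmallest S (fun i => y i - (β.1 * x i + β.2)) k = 0 ∧
      kthSmallest S' (fun i => y i - (β.1 * x i + β.2)) k' = 0 := by
  set F : ℝ → ℝ := fun t => kthSmallest S (fun i => y i - t * x i) k with hF
  set G : ℝ → ℝ := fun t => kthSmallest S' (fun i => y i - t * x i) k' with hG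
  set M := S.sup' hS x with hM
  set m' := S'.inf' hS' x with hm'
  have hgap : 0 < m' - M := by
    rw [sub_pos, hM, hm']
    rw [Finset.sup'_lt_iff]
    intro i hi
    rw [Finset.lt_inf'_iff]
    intro j hj
    exact hsep i hi j hj
  -- rewrite of the condition
  have hcond : ∀ β : ℝ × ℝ,
      (kthSmallest S (fun i => y i - (β.1 * x i + β.2)) k = 0 ∧
       kthSmallest S' (fun i => y i - (β.1 * x i + β.2)) k' = 0) ↔
      (F β.1 = β.2 ∧ G β.1 = β.2) := by
    intro β
    have e1 : (fun i => y i - (β.1 * x i + β.2)) = fun i => (y i - β.1 * x i) + (-β.2) := by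
      funext i; ring
    have e2 : kthSmallest S (fun i => y i - (β.1 * x i + β.2)) k = F β.1 - β.2 := by
      rw [e1, kth_add_const S _ _ k hk1 hk2]; ring_nf; simp only [hF]; ring
    have e3 : kthSmallest S' (fun i => y i - (β.1 * x i + β.2)) k' = G β.1 - β.2 := by
      rw [e1, kth_add_const S' _ _ k' hk1' hk2']; ring_nf; simp only [hG]; ring
    rw [e2, e3]
    constructor <;> rintro ⟨h1, h2⟩ <;> constructor <;> linarith
  -- key monotonicity of H = F - G
  have hkey : ∀ s t : ℝ, s ≤ t → (F s - G s) + (t - s) * (m' - M) ≤ F t - G t := by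
    intro s t hst
    have h1 := (kth_shift_bounds S hS x y k hk1 hk2 s t hst).1
    have h2 := (kth_shift_bounds S' hS' x y k' hk1' hk2' s t hst).2
    have h1' : F s + (s - t) * M ≤ F t := h1
    have h2' : G t ≤ G s + (s - t) * m' := h2
    nlinarith [h1', h2']
  have hHcont : Continuous (fun t => F t - G t) :=
    (kth_line_continuous S hS x y k hk1 hk2).sub
      (kth_line_continuous S' hS' x y k' hk1' hk2')
  set H : ℝ → ℝ := fun t => F t - G t with hH
  have hkey' : ∀ s t : ℝ, s ≤ t → H s + (t - s) * (m' - M) ≤ H t := hkey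
  -- existence of a root of H
  set c : ℝ := (|H 0| + 1) / (m' - M) with hc
  have hcpos : 0 < c := by positivity
  have hHa : H (-c) ≤ -1 := by
    have h1 : H (-c) + (0 - (-c)) * (m' - M) ≤ H 0 := hkey' (-c) 0 (by linarith)
    have hmul : (0 - (-c)) * (m' - M) = |H 0| + 1 := by
      rw [hc]; field_simp; ring
    linarith [le_abs_self (H 0), neg_abs_le (H 0)]
  have hHb : 1 ≤ H c := by
    have h1 : H 0 + (c - 0) * (m' - M) ≤ H c := hkey' 0 c (by linarith)
    have hmul : (c - 0) * (m' - M) = |H 0| + 1 := by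
      rw [hc]; field_simp; ring
    linarith [le_abs_self (H 0), neg_abs_le (H 0)]
  have hsub := intermediate_value_Icc (by linarith : (-c : ℝ) ≤ c) hHcont.continuousOn
  have h0mem : (0:ℝ) ∈ Set.Icc (H (-c)) (H c) := ⟨by linarith, by linarith⟩
  obtain ⟨t₀, _, ht₀⟩ := hsub h0mem
  -- uniqueness of the root
  have huniq : ∀ u : ℝ, H u = 0 → u = t₀ := by
    intro u hu
    by_contra hne
    rcases lt_or_gt_of_ne hne with h | h
    · have h1 : H u + (t₀ - u) * (m' - M) ≤ H t₀ := hkey' u t₀ h.le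
      rw [hu, ht₀] at h1
      linarith [mul_pos (sub_pos.mpr h) hgap]
    · have h1 : H t₀ + (u - t₀) * (m' - M) ≤ H u := hkey' t₀ u h.le
      rw [hu, ht₀] at h1
      linarith [mul_pos (sub_pos.mpr h) hgap]
  refine ⟨(t₀, F t₀), ?_, ?_⟩
  · have hGF : G t₀ = F t₀ := by
      have h' : F t₀ - G t₀ = 0 := ht₀
      linarith
    exact (hcond (t₀, F t₀)).mpr ⟨rfl, hGF⟩
  · intro β hβ
    obtain ⟨h1, h2⟩ := (hcond β).mp hβ
    have hroot : H β.1 = 0 := by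
      have : F β.1 - G β.1 = β.2 - β.2 := by rw [h1, h2]
      simpa using this
    have hb1 : β.1 = t₀ := huniq _ hroot
    have hb2 : β.2 = F t₀ := by rw [← h1, hb1]
    exact Prod.ext hb1 hb2

/-- In two dimensions, if the index sets `S, S'` are separable by a vertical line, then
their x-coordinate projections are well separable in `ℝ¹` (one lies entirely below the
other), and for any `k ∈ [|S|]`, `k' ∈ [|S'|]` there is a unique line making the `k`-th
smallest residual in `S` and the `k'`-th smallest residual in `S'` both zero. -/
theorem stmt19 (n : ℕ) (x y : Fin n → ℝ) (S S' : Finset (Fin n))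
    (hS : S.Nonempty) (hS' : S'.Nonempty)
    (hsep : (∀ i ∈ S, ∀ j ∈ S', x i < x j) ∨ (∀ j ∈ S', ∀ i ∈ S, x j < x i))
    (k k' : ℕ) (hk : 1 ≤ k ∧ k ≤ S.card) (hk' : 1 ≤ k' ∧ k' ≤ S'.card) :
    ((∀ a ∈ x '' ↑S, ∀ b ∈ x '' ↑S', a < b) ∨
      (∀ a ∈ x '' ↑S, ∀ b ∈ x '' ↑S', b < a)) ∧
    ∃! β : ℝ × ℝ,
      kthSmallest S (fun i => y i - (β.1 * x i + β.2)) k = 0 ∧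
      kthSmallest S' (fun i => y i - (β.1 * x i + β.2)) k' = 0 := by
  obtain ⟨hk1, hk2⟩ := hk
  obtain ⟨hk1', hk2'⟩ := hk'
  constructor
  · rcases hsep with h | h
    · left
      rintro a ⟨i, hi, rfl⟩ b ⟨j, hj, rfl⟩
      exact h i hi j hj
    · right
      rintro a ⟨i, hi, rfl⟩ b ⟨j, hj, rfl⟩
      exact h j hj i hi
  · rcases hsep with h | h
    · exact master x y S S' hS hS' h k k' hk1 hk2 hk1' hk2'
    · obtain ⟨β, ⟨h1, h2⟩, huniq⟩ :=
        master x y S' S hS' hS h k' k hk1' hk2' hk1 hk2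
      exact ⟨β, ⟨h2, h1⟩, fun b hb => huniq b ⟨hb.2, hb.1⟩⟩
end
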